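/- arXiv:1502.01399 — 4 statements merged into one kernel-verified Lean document; each statement's English description precedes it below -/
import Mathlib

section
/- (McDiarmid-type coupling) Let k ≥ 3 be an integer and let n be a positive integer. Then for every p ∈ (0,1), the probability that the random directed k-uniform hypergraph D^{(k)}_{n,p} contains a directed loose Hamilton cycle is at least the probability that the random k-uniform hypergraph H^{(k)}_{n,p} contains a loose Hamilton cycle. -/
open MeasureTheory Filter

/-- The Bernoulli measure on `Bool` with success probability `p` (a probability
measure whenever `0 ≤ p ≤ 1`). -/
noncomputable def bern (p : ℝ) : Measure Bool :=
  ENNReal.ofReal p • Measure.dirac true + ENNReal.ofReal (1 - p) • Measure.dirac false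

/-- The ordered `k`-tuples of distinct elements of `Fin n`, i.e. the possible arcs of a
directed `k`-uniform hypergraph on `Fin n`. -/
abbrev InjTup (n k : ℕ) := {f : Fin k → Fin n // Function.Injective f}

/-- The random `k`-uniform hypergraph `H^{(k)}_{n,p}`: each `k`-element subset of
`Fin n` is an edge with probability `p`, independently of all others. -/
noncomputable def hyperMeasure (n k : ℕ) (p : ℝ) :
    Measure ({S : Finset (Fin n) // S.card = k} → Bool) :=
  Measure.pi fun _ => bern p

/-- The random directed `k`-uniform hypergraph `D^{(k)}_{n,p}`: each ordered `k`-tuple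
of distinct elements of `Fin n` is an arc with probability `p`, independently of all
others. -/
noncomputable def dirHyperMeasure (n k : ℕ) (p : ℝ) :
    Measure (InjTup n k → Bool) :=
  Measure.pi fun _ => bern p

/-- A loose Hamilton cycle in a `k`-uniform hypergraph with vertex type `V` and edge
predicate `E`: a cyclic ordering of all vertices together with edges, each consisting of
`k` consecutive vertices, consecutive edges meeting in exactly one vertex and every
vertex covered. -/
def HasLooseHamCycle (k : ℕ) {V : Type*} [Fintype V] [DecidableEq V]
    (E : Finset V → Prop) : Prop :=
  ∃ (m : ℕ) (σ : ZMod (Fintype.card V) ≃ V), 0 < m ∧ Fintype.card V = m * (k - 1) ∧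
    ∀ i : Fin m,
      Function.Injective (fun t : Fin k => σ (((i : ℕ) * (k - 1) + (t : ℕ) : ℕ))) ∧
      E (Finset.image (fun t : Fin k => σ (((i : ℕ) * (k - 1) + (t : ℕ) : ℕ))) Finset.univ)

/-- A directed loose Hamilton cycle in a directed `k`-uniform hypergraph with vertex
type `V` and arc predicate `A`: a cyclic ordering of all vertices together with arcs,
each arc being a block of `k` consecutive vertices taken in the order of the cyclic
ordering, such that consecutive arcs meet in exactly one vertex, the last vertex of each
arc is the first vertex of the next one, and every vertex is covered. -/
def HasDirLooseHamCycle (k : ℕ) {V : Type*} [Fintype V]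
    (A : (Fin k → V) → Prop) : Prop :=
  ∃ (m : ℕ) (σ : ZMod (Fintype.card V) ≃ V), 0 < m ∧ Fintype.card V = m * (k - 1) ∧
    ∀ i : Fin m,
      Function.Injective (fun t : Fin k => σ (((i : ℕ) * (k - 1) + (t : ℕ) : ℕ))) ∧
      A (fun t : Fin k => σ (((i : ℕ) * (k - 1) + (t : ℕ) : ℕ)))

namespace MCD

/-! ### Bernoulli weights -/

noncomputable def w (p : ℝ) (b : Bool) : ENNReal :=
  if b then ENNReal.ofReal p else ENNReal.ofReal (1 - p)

lemma bern_singleton (p : ℝ) (b : Bool) : bern p {b} = w p b := by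
  cases b <;>
    simp [bern, w, Measure.dirac_apply, Set.indicator_apply]

lemma bern_univ (p : ℝ) (hp0 : 0 ≤ p) (hp1 : p ≤ 1) : bern p Set.univ = 1 := by
  simp only [bern, Measure.add_apply, Measure.smul_apply, Measure.dirac_apply,
    Set.indicator_univ, Pi.one_apply, smul_eq_mul, mul_one]
  rw [← ENNReal.ofReal_add hp0 (by linarith)]
  norm_num

lemma w_sum (p : ℝ) (hp0 : 0 ≤ p) (hp1 : p ≤ 1) : w p true + w p false = 1 := by
  have := bern_univ p hp0 hp1
  rw [show (Set.univ : Set Bool) = {true} ∪ {false} by ext b; cases b <;> simp] at this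
  rw [measure_union (by simp) (by simp [MeasurableSet.singleton])] at this
  rw [bern_singleton, bern_singleton] at this
  exact this

instance (p : ℝ) : IsFiniteMeasure (bern p) := by
  constructor
  have : bern p Set.univ = ENNReal.ofReal p * 1 + ENNReal.ofReal (1 - p) * 1 := by
    simp [bern]
  rw [this]
  exact ENNReal.add_lt_top.mpr ⟨by simp [ENNReal.ofReal_lt_top], by simp [ENNReal.ofReal_lt_top]⟩

/-- measure of an arbitrary set under a finite product of measures on finite discrete
spaces, as a finite sum. -/
lemma pi_apply_sum {ι : Type*} [Fintype ι] [DecidableEq ι] {X : ι → Type*}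
    [∀ i, MeasurableSpace (X i)]
    [∀ i, Fintype (X i)] [∀ i, MeasurableSingletonClass (X i)]
    (μ : ∀ i, Measure (X i)) [∀ i, SigmaFinite (μ i)] (E : Set (∀ i, X i))
    [DecidablePred (· ∈ E)] :
    Measure.pi μ E = ∑ x : ∀ i, X i, (if x ∈ E then ∏ i, μ i {x i} else 0) := by
  classical
  have hsingle : ∀ x : ∀ i, X i, Measure.pi μ {x} = ∏ i, μ i {x i} := by
    intro x
    rw [← Set.univ_pi_singleton, Measure.pi_pi]
  have hE : E = ⋃ x ∈ Finset.univ.filter (· ∈ E), ({x} : Set (∀ i, X i)) := by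
    ext x; simp
  rw [congrArg (Measure.pi μ) hE, measure_biUnion_finset]
  · rw [Finset.sum_filter]
    exact Finset.sum_congr rfl fun x _ => by split <;> simp [hsingle]
  · intro a _ b _ hab
    simp [Function.onFun, Set.disjoint_singleton, hab]
  · intro b _; exact MeasurableSet.singleton b

lemma total_sum {α : Type*} [Fintype α] [DecidableEq α] (p : ℝ) (hp0 : 0 ≤ p) (hp1 : p ≤ 1) :
    ∑ g : α → Bool, ∏ x, w p (g x) = 1 := by
  classical
  have h1 := pi_apply_sum (fun _ : α => bern p) (Set.univ)
  simp only [Set.mem_univ, if_true, bern_singleton] at h1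
  rw [Measure.pi_univ] at h1
  simp only [bern_univ p hp0 hp1, Finset.prod_const_one] at h1
  rw [← h1]

lemma marginal_sum {α : Type*} [Fintype α] [DecidableEq α]
    (p : ℝ) (hp0 : 0 ≤ p) (hp1 : p ≤ 1) (a₀ : α) :
    ∑ g : α → Bool, (if g a₀ = true then ∏ x, w p (g x) else 0) = ENNReal.ofReal p := by
  classical
  have h1 := pi_apply_sum (fun _ : α => bern p) {g : α → Bool | g a₀ = true}
  have h2 : {g : α → Bool | g a₀ = true}
      = Set.univ.pi (fun x => if x = a₀ then ({true} : Set Bool) else Set.univ) := by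
    ext g
    constructor
    · intro h x _
      by_cases hx : x = a₀
      · subst hx; simp_all
      · simp [hx]
    · intro h
      have := h a₀ (Set.mem_univ _)
      simpa using this
  rw [congrArg (Measure.pi fun _ : α => bern p) h2, Measure.pi_pi] at h1
  have h3 : (∏ x : α, bern p (if x = a₀ then ({true} : Set Bool) else Set.univ))
      = ENNReal.ofReal p := by
    rw [Finset.prod_eq_single a₀]
    · simp [bern_singleton, w]
    · intro b _ hb
      rw [if_neg hb]
      exact bern_univ p hp0 hp1
    · intro h; exact absurd (Finset.mem_univ a₀) h
  rw [h3] at h1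
  rw [h1]
  refine Finset.sum_congr rfl fun g _ => ?_
  by_cases hg : g a₀ = true
  · simp [Set.mem_setOf_eq, hg, bern_singleton]
  · simp [Set.mem_setOf_eq, hg, bern_singleton]

/-! ### The abstract combinatorial coupling lemma -/

open Classical in
lemma swap_ite_sum {α β : Type*} [Fintype α] [Fintype β] (P : α → β → Prop)
    (f : α → ENNReal) (g : β → ENNReal) :
    ∑ a : α, (∑ b : β, if P a b then g b else 0) * f a
      = ∑ b : β, g b * ∑ a : α, if P a b then f a else 0 := by
  have h1 : ∀ a, (∑ b : β, if P a b then g b else 0) * f a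
      = ∑ b : β, if P a b then g b * f a else 0 := by
    intro a
    rw [Finset.sum_mul]
    exact Finset.sum_congr rfl fun b _ => by split <;> simp
  have h2 : ∀ b, g b * (∑ a : α, if P a b then f a else 0)
      = ∑ a : α, if P a b then g b * f a else 0 := by
    intro b
    rw [Finset.mul_sum]
    exact Finset.sum_congr rfl fun a _ => by split <;> simp
  simp only [h1, h2]
  exact Finset.sum_comm

open Classical in
lemma split_cons {N : ℕ} (X : Fin (N + 1) → Type) [∀ j, Fintype (X j)]
    (ξ : ∀ j, X j → ENNReal) {C : Type} (R : C → ∀ j, Set (X j)) :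
    (∑ x : ∀ j, X j, if ∃ c, ∀ j, x j ∈ R c j then ∏ j, ξ j (x j) else 0)
      = ∑ xr : ∀ j : Fin N, X j.succ,
          (∑ x0 : X 0, if ∃ c, (∀ j, xr j ∈ R c j.succ) ∧ x0 ∈ R c 0
            then ξ 0 x0 else 0) * ∏ j, ξ j.succ (xr j) := by
  rw [← Fintype.sum_equiv (Fin.consEquiv X)
    (fun z => if ∃ c, (∀ j, z.2 j ∈ R c j.succ) ∧ z.1 ∈ R c 0
      then ξ 0 z.1 * ∏ j, ξ j.succ (z.2 j) else 0) _ ?_]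
  · rw [Fintype.sum_prod_type]
    rw [Finset.sum_comm]
    refine Finset.sum_congr rfl fun xr _ => ?_
    rw [Finset.sum_mul]
    refine Finset.sum_congr rfl fun x0 _ => ?_
    split <;> simp
  · intro z
    obtain ⟨x0, xr⟩ := z
    have hcond : (∃ c, ∀ j, (Fin.consEquiv X) (x0, xr) j ∈ R c j) ↔
        (∃ c, (∀ j, xr j ∈ R c j.succ) ∧ x0 ∈ R c 0) := by
      constructor
      · rintro ⟨c, h⟩
        rw [Fin.forall_fin_succ] at h
        exact ⟨c, fun j => by simpa [Fin.consEquiv] using h.2 j,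
          by simpa [Fin.consEquiv] using h.1⟩
      · rintro ⟨c, h1, h2⟩
        refine ⟨c, Fin.forall_fin_succ.mpr ⟨by simpa [Fin.consEquiv] using h2,
          fun j => by simpa [Fin.consEquiv] using h1 j⟩⟩
    have hprod : ∏ j, ξ j ((Fin.consEquiv X) (x0, xr) j)
        = ξ 0 x0 * ∏ j, ξ j.succ (xr j) := by
      rw [Fin.prod_univ_succ]; simp [Fin.consEquiv]
    simp only [hcond, hprod]

open Classical in
/-- The abstract McDiarmid coupling lemma, in finite-sum form. -/
lemma keyLemma : ∀ (N : ℕ) (X Y : Fin N → Type) [∀ j, Fintype (X j)] [∀ j, Fintype (Y j)]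
    (ξ : ∀ j, X j → ENNReal) (η : ∀ j, Y j → ENNReal) (C : Type) (A : C → ∀ j, Set (X j))
    (B : C → ∀ j, Set (Y j))
    (_ : ∀ (j : Fin N) (T : Set C),
      (∑ x : X j, if ∃ c ∈ T, x ∈ A c j then ξ j x else 0) ≤
        ∑ y : Y j, if ∃ c ∈ T, y ∈ B c j then η j y else 0),
    (∑ x : ∀ j, X j, if ∃ c, ∀ j, x j ∈ A c j then ∏ j, ξ j (x j) else 0) ≤
      ∑ y : ∀ j, Y j, if ∃ c, ∀ j, y j ∈ B c j then ∏ j, η j (y j) else 0 := by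
  intro N
  induction N with
  | zero =>
    intro X Y _ _ ξ η C A B hcomp
    have h1 : ∀ x : ∀ j : Fin 0, X j, (∃ c, ∀ j, x j ∈ A c j) ↔ Nonempty C := by
      intro x
      exact ⟨fun ⟨c, _⟩ => ⟨c⟩, fun ⟨c⟩ => ⟨c, fun j => j.elim0⟩⟩
    have h2 : ∀ y : ∀ j : Fin 0, Y j, (∃ c, ∀ j, y j ∈ B c j) ↔ Nonempty C := by
      intro y
      exact ⟨fun ⟨c, _⟩ => ⟨c⟩, fun ⟨c⟩ => ⟨c, fun j => j.elim0⟩⟩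
    simp only [h1, h2, Finset.univ_unique, Finset.sum_const]
    simp
  | succ N ih =>
    intro X Y _ _ ξ η C A B hcomp
    rw [split_cons X ξ A, split_cons Y η B]
    calc
      ∑ xr : ∀ j : Fin N, X j.succ,
          (∑ x0 : X 0, if ∃ c, (∀ j, xr j ∈ A c j.succ) ∧ x0 ∈ A c 0
            then ξ 0 x0 else 0) * ∏ j, ξ j.succ (xr j)
        ≤ ∑ xr : ∀ j : Fin N, X j.succ,
          (∑ y0 : Y 0, if ∃ c, (∀ j, xr j ∈ A c j.succ) ∧ y0 ∈ B c 0
            then η 0 y0 else 0) * ∏ j, ξ j.succ (xr j) := by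
          refine Finset.sum_le_sum fun xr _ => mul_le_mul_left ?_ _
          have := hcomp 0 {c | ∀ j, xr j ∈ A c j.succ}
          simpa only [Set.mem_setOf_eq] using this
      _ = ∑ y0 : Y 0, η 0 y0 * ∑ xr : ∀ j : Fin N, X j.succ,
            (if ∃ c, (∀ j, xr j ∈ A c j.succ) ∧ y0 ∈ B c 0
              then ∏ j, ξ j.succ (xr j) else 0) :=
          swap_ite_sum _ _ _
      _ ≤ ∑ y0 : Y 0, η 0 y0 * ∑ yr : ∀ j : Fin N, Y j.succ,
            (if ∃ c, (∀ j, yr j ∈ B c j.succ) ∧ y0 ∈ B c 0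
              then ∏ j, η j.succ (yr j) else 0) := by
          refine Finset.sum_le_sum fun y0 _ => mul_le_mul_right ?_ _
          have e1 : ∀ xr : ∀ j : Fin N, X j.succ,
              (∃ c, (∀ j, xr j ∈ A c j.succ) ∧ y0 ∈ B c 0) ↔
              (∃ c : {c : C // y0 ∈ B c 0}, ∀ j, xr j ∈ A c.1 j.succ) :=
            fun xr => ⟨fun ⟨c, h1, h2⟩ => ⟨⟨c, h2⟩, h1⟩, fun ⟨⟨c, h2⟩, h1⟩ => ⟨c, h1, h2⟩⟩
          have e2 : ∀ yr : ∀ j : Fin N, Y j.succ,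
              (∃ c, (∀ j, yr j ∈ B c j.succ) ∧ y0 ∈ B c 0) ↔
              (∃ c : {c : C // y0 ∈ B c 0}, ∀ j, yr j ∈ B c.1 j.succ) :=
            fun yr => ⟨fun ⟨c, h1, h2⟩ => ⟨⟨c, h2⟩, h1⟩, fun ⟨⟨c, h2⟩, h1⟩ => ⟨c, h1, h2⟩⟩
          simp only [e1, e2]
          refine ih (fun j => X j.succ) (fun j => Y j.succ) (fun j => ξ j.succ)
            (fun j => η j.succ) {c : C // y0 ∈ B c 0}
            (fun c j => A c.1 j.succ) (fun c j => B c.1 j.succ) ?_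
          intro j T'
          have := hcomp j.succ (Subtype.val '' T')
          have f1 : ∀ x : X j.succ, (∃ c ∈ Subtype.val '' T', x ∈ A c j.succ) ↔
              (∃ c ∈ T', x ∈ A c.1 j.succ) := by
            intro x
            constructor
            · rintro ⟨c, ⟨c', hc', rfl⟩, hx⟩; exact ⟨c', hc', hx⟩
            · rintro ⟨c', hc', hx⟩; exact ⟨c'.1, ⟨c', hc', rfl⟩, hx⟩
          have f2 : ∀ y : Y j.succ, (∃ c ∈ Subtype.val '' T', y ∈ B c j.succ) ↔
              (∃ c ∈ T', y ∈ B c.1 j.succ) := by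
            intro y
            constructor
            · rintro ⟨c, ⟨c', hc', rfl⟩, hy⟩; exact ⟨c', hc', hy⟩
            · rintro ⟨c', hc', hy⟩; exact ⟨c'.1, ⟨c', hc', rfl⟩, hy⟩
          simpa only [f1, f2] using this
      _ = ∑ yr : ∀ j : Fin N, Y j.succ,
          (∑ y0 : Y 0, if ∃ c, (∀ j, yr j ∈ B c j.succ) ∧ y0 ∈ B c 0
            then η 0 y0 else 0) * ∏ j, η j.succ (yr j) :=
          (swap_ite_sum _ _ _).symm

/-! ### Tuples, images and permutations -/

variable {n k : ℕ}

/-- the image of an injective tuple, as a `k`-subset. -/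
def imgJ (f : InjTup n k) : {S : Finset (Fin n) // S.card = k} :=
  ⟨Finset.image f.1 Finset.univ, by
    rw [Finset.card_image_of_injective _ f.2, Finset.card_univ, Fintype.card_fin]⟩

lemma mem_imgJ (f : InjTup n k) (t : Fin k) : f.1 t ∈ (imgJ f).1 := by
  simp [imgJ]

/-- the permutation comparing an injective tuple with the monotone enumeration of its
image. -/
noncomputable def permOf (f : InjTup n k) : Equiv.Perm (Fin k) :=
  Equiv.ofBijective
    (fun t => ((imgJ f).1.orderIsoOfFin (imgJ f).2).symm ⟨f.1 t, mem_imgJ f t⟩)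
    (Finite.injective_iff_bijective.mp (by
      intro t t' h
      apply f.2
      have := congrArg (fun z => (((imgJ f).1.orderIsoOfFin (imgJ f).2) z : Fin n)) h
      simpa using this))

lemma permOf_spec (f : InjTup n k) (t : Fin k) :
    (((imgJ f).1.orderIsoOfFin (imgJ f).2) (permOf f t) : Fin n) = f.1 t := by
  simp [permOf, Equiv.ofBijective]

lemma orderIso_congr {S₁ S₂ : Finset (Fin n)} (h₁ : S₁.card = k) (h₂ : S₂.card = k)
    (hEq : S₁ = S₂) (x : Fin k) :
    ((S₁.orderIsoOfFin h₁ x : S₁) : Fin n) = ((S₂.orderIsoOfFin h₂ x : S₂) : Fin n) := by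
  subst hEq; rfl

/-- injective tuples correspond to a `k`-subset together with a permutation. -/
noncomputable def tupleEquiv (n k : ℕ) :
    InjTup n k ≃ ({S : Finset (Fin n) // S.card = k} × Equiv.Perm (Fin k)) where
  toFun f := ⟨imgJ f, permOf f⟩
  invFun z := ⟨fun t => ((z.1.1.orderIsoOfFin z.1.2) (z.2 t) : Fin n), by
    intro t t' h
    apply z.2.injective
    exact (z.1.1.orderIsoOfFin z.1.2).injective (Subtype.ext h)⟩
  left_inv f := by
    apply Subtype.ext
    funext t
    exact permOf_spec f t
  right_inv z := by
    obtain ⟨⟨S, hS⟩, π⟩ := z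
    set g : InjTup n k := ⟨fun t => ((S.orderIsoOfFin hS) (π t) : Fin n), _⟩ with hg
    have himg : (imgJ g).1 = S := by
      ext x
      simp only [imgJ, Finset.mem_image, Finset.mem_univ, true_and]
      constructor
      · rintro ⟨t, rfl⟩
        exact ((S.orderIsoOfFin hS) (π t)).2
      · intro hx
        refine ⟨π.symm ((S.orderIsoOfFin hS).symm ⟨x, hx⟩), ?_⟩
        simp [hg]
        rw [← Finset.coe_orderIsoOfFin_apply, OrderIso.apply_symm_apply]
    have h1 : imgJ g = ⟨S, hS⟩ := Subtype.ext himg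
    refine Prod.ext h1 ?_
    · apply Equiv.ext
      intro t
      have h2 : (((imgJ g).1.orderIsoOfFin (imgJ g).2) (permOf g t) : Fin n)
          = ((S.orderIsoOfFin hS) (permOf g t) : Fin n) :=
        orderIso_congr _ _ himg _
      have h3 := permOf_spec g t
      rw [h2] at h3
      have : (S.orderIsoOfFin hS) (permOf g t) = (S.orderIsoOfFin hS) (π t) :=
        Subtype.ext (by rw [h3])
      exact (S.orderIsoOfFin hS).injective this

/-! ### Cycle data -/

/-- The data of a potential loose Hamilton cycle. -/
structure CycData (n k : ℕ) where
  m : ℕ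
  σ : ZMod (Fintype.card (Fin n)) ≃ Fin n
  hm : 0 < m
  hcard : Fintype.card (Fin n) = m * (k - 1)
  hinj : ∀ i : Fin m, Function.Injective
    (fun t : Fin k => σ (((i : ℕ) * (k - 1) + (t : ℕ) : ℕ)))

def blkTup (c : CycData n k) (i : Fin c.m) : Fin k → Fin n :=
  fun t => c.σ (((i : ℕ) * (k - 1) + (t : ℕ) : ℕ))

def arc (c : CycData n k) (i : Fin c.m) : InjTup n k := ⟨blkTup c i, c.hinj i⟩

def edge (c : CycData n k) (i : Fin c.m) : {S : Finset (Fin n) // S.card = k} :=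
  imgJ (arc c i)

noncomputable def pm (c : CycData n k) (i : Fin c.m) : Equiv.Perm (Fin k) :=
  permOf (arc c i)

lemma edge_injective (hk : 3 ≤ k) (c : CycData n k) (i i' : Fin c.m)
    (h : Finset.image (blkTup c i) Finset.univ = Finset.image (blkTup c i') Finset.univ) :
    i = i' := by
  by_cases hne : i = i'
  · exact hne
  · exfalso
    set ν := Fintype.card (Fin n) with hνdef
    have hm2 : 2 ≤ c.m := by
      have h1 : (i : ℕ) ≠ (i' : ℕ) := fun hh => hne (Fin.ext hh)
      have := i.isLt
      have := i'.isLt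
      omega
    have hν : ν = c.m * (k - 1) := c.hcard
    have hνk : k + 1 ≤ ν := by
      have := Nat.mul_le_mul_right (k - 1) hm2
      omega
    haveI : NeZero ν := ⟨by omega⟩
    set g : Fin c.m → Fin k → ZMod ν :=
      fun i t => (((i : ℕ) * (k - 1) + (t : ℕ) : ℕ) : ZMod ν) with hg
    have himg : Finset.image (g i) Finset.univ = Finset.image (g i') Finset.univ := by
      have h1 : ∀ i₀, Finset.image (blkTup c i₀) Finset.univ
          = Finset.image (⇑c.σ) (Finset.image (g i₀) Finset.univ) := by
        intro i₀
        rw [Finset.image_image]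
        rfl
      rw [h1, h1] at h
      exact Finset.image_injective c.σ.injective h
    have hmem : ∀ (i₀ : Fin c.m) (x : ZMod ν),
        x ∈ Finset.image (g i₀) Finset.univ ↔
          ∃ t : Fin k, (((i₀ : ℕ) * (k - 1) : ℕ) : ZMod ν) + ((t : ℕ) : ZMod ν) = x := by
      intro i₀ x
      simp only [Finset.mem_image, Finset.mem_univ, true_and, hg]
      constructor
      · rintro ⟨t, rfl⟩; exact ⟨t, by push_cast; ring⟩
      · rintro ⟨t, rfl⟩; exact ⟨t, by push_cast; ring⟩
    set a : ZMod ν := (((i : ℕ) * (k - 1) : ℕ) : ZMod ν)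
    set a' : ZMod ν := (((i' : ℕ) * (k - 1) : ℕ) : ZMod ν)
    have ha : ∃ t : Fin k, a' + ((t : ℕ) : ZMod ν) = a := by
      rw [← hmem i']
      rw [← himg, hmem i]
      refine ⟨⟨0, by omega⟩, ?_⟩
      simp only [Fin.val_mk, Nat.cast_zero, add_zero]
      rfl
    obtain ⟨t0, ht0⟩ := ha
    have hcast_ne : ∀ s : Fin k, ((s : ℕ) : ZMod ν) ≠ -1 := by
      intro s hs
      have : (((s : ℕ) + 1 : ℕ) : ZMod ν) = 0 := by push_cast [hs]; ring
      have hdvd : ν ∣ (s : ℕ) + 1 := (ZMod.natCast_eq_zero_iff _ _).mp this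
      have := Nat.le_of_dvd (by omega) hdvd
      have := s.isLt
      omega
    have ht00 : (t0 : ℕ) = 0 := by
      by_contra ht0ne
      have h1 : a - 1 ∈ Finset.image (g i') Finset.univ := by
        rw [hmem i']
        refine ⟨⟨(t0 : ℕ) - 1, by have := t0.isLt; omega⟩, ?_⟩
        have : (((t0 : ℕ) - 1 : ℕ) : ZMod ν) + 1 = ((t0 : ℕ) : ZMod ν) := by
          have h5 : ((t0 : ℕ) - 1) + 1 = (t0 : ℕ) := by omega
          calc (((t0 : ℕ) - 1 : ℕ) : ZMod ν) + 1 = ((((t0 : ℕ) - 1) + 1 : ℕ) : ZMod ν) := by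
                push_cast; ring
            _ = ((t0 : ℕ) : ZMod ν) := by rw [h5]
        simp only [Fin.val_mk]
        rw [← ht0, ← this]
        ring
      rw [← himg, hmem i] at h1
      obtain ⟨s, hs⟩ := h1
      have : ((s : ℕ) : ZMod ν) = -1 := by
        have ha1 : a + ((s : ℕ) : ZMod ν) = a + (-1) := by rw [hs]; ring
        exact add_left_cancel ha1
      exact hcast_ne s this
    have haa : a = a' := by
      rw [← ht0, ht00]
      simp
    have hmod : (i : ℕ) * (k - 1) ≡ (i' : ℕ) * (k - 1) [MOD ν] :=
      (ZMod.natCast_eq_natCast_iff _ _ _).mp haa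
    have hlt : ∀ i₀ : Fin c.m, (i₀ : ℕ) * (k - 1) < ν := by
      intro i₀
      rw [hν]
      exact Nat.mul_lt_mul_of_lt_of_le i₀.isLt (le_refl _) (by omega)
    have h6 := hmod
    unfold Nat.ModEq at h6
    rw [Nat.mod_eq_of_lt (hlt i), Nat.mod_eq_of_lt (hlt i')] at h6
    have : (i : ℕ) = (i' : ℕ) := Nat.eq_of_mul_eq_mul_right (by omega) h6
    exact hne (Fin.ext this)

lemma edge_inj (hk : 3 ≤ k) (c : CycData n k) {i i' : Fin c.m}
    (h : edge c i = edge c i') : i = i' :=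
  edge_injective hk c i i' (congrArg Subtype.val h)

/-! ### per-coordinate constraint sets -/

def Aund (c : CycData n k) (j : {S : Finset (Fin n) // S.card = k}) : Set Bool :=
  {b | ∀ i, edge c i = j → b = true}

def Bdir (c : CycData n k) (j : {S : Finset (Fin n) // S.card = k}) :
    Set (Equiv.Perm (Fin k) → Bool) :=
  {g | ∀ i, edge c i = j → g (pm c i) = true}

open Classical in
lemma hcomp (hk : 3 ≤ k) (p : ℝ) (hp0 : 0 ≤ p) (hp1 : p ≤ 1)
    (j : {S : Finset (Fin n) // S.card = k}) (T : Set (CycData n k)) :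
    (∑ b : Bool, if ∃ c ∈ T, b ∈ Aund c j then w p b else 0)
      ≤ ∑ g : Equiv.Perm (Fin k) → Bool,
          if ∃ c ∈ T, g ∈ Bdir c j then ∏ π, w p (g π) else 0 := by
  by_cases hT : ∃ c ∈ T, ∀ i, edge c i ≠ j
  · obtain ⟨c₀, hc₀T, hc₀⟩ := hT
    have hR : ∀ g : Equiv.Perm (Fin k) → Bool, ∃ c ∈ T, g ∈ Bdir c j :=
      fun g => ⟨c₀, hc₀T, fun i hi => absurd hi (hc₀ i)⟩
    calc (∑ b : Bool, if ∃ c ∈ T, b ∈ Aund c j then w p b else 0)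
        ≤ ∑ b : Bool, w p b := Finset.sum_le_sum fun b _ => by split <;> simp
      _ = 1 := by rw [Fintype.sum_bool]; exact w_sum p hp0 hp1
      _ = ∑ g : Equiv.Perm (Fin k) → Bool, ∏ π, w p (g π) := (total_sum p hp0 hp1).symm
      _ = ∑ g : Equiv.Perm (Fin k) → Bool,
            if ∃ c ∈ T, g ∈ Bdir c j then ∏ π, w p (g π) else 0 :=
          Finset.sum_congr rfl fun g _ => by rw [if_pos (hR g)]
  · push_neg at hT
    by_cases hT2 : ∃ c, c ∈ T
    · obtain ⟨c₀, hc₀⟩ := hT2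
      obtain ⟨i₀, hi₀⟩ := hT c₀ hc₀
      have hLHS : (∑ b : Bool, if ∃ c ∈ T, b ∈ Aund c j then w p b else 0)
          = ENNReal.ofReal p := by
        rw [Fintype.sum_bool]
        rw [if_pos ⟨c₀, hc₀, fun i _ => rfl⟩]
        rw [if_neg]
        · simp [w]
        · rintro ⟨c, hc, hfalse⟩
          obtain ⟨i, hi⟩ := hT c hc
          exact Bool.false_ne_true (hfalse i hi)
      rw [hLHS]
      calc ENNReal.ofReal p
          = ∑ g : Equiv.Perm (Fin k) → Bool,
              (if g (pm c₀ i₀) = true then ∏ π, w p (g π) else 0) :=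
            (marginal_sum p hp0 hp1 (pm c₀ i₀)).symm
        _ ≤ ∑ g : Equiv.Perm (Fin k) → Bool,
              if ∃ c ∈ T, g ∈ Bdir c j then ∏ π, w p (g π) else 0 := by
            refine Finset.sum_le_sum fun g _ => ?_
            split
            · rename_i hg
              rw [if_pos]
              refine ⟨c₀, hc₀, fun i hi => ?_⟩
              have : i = i₀ := edge_inj hk c₀ (hi.trans hi₀.symm)
              rw [this]
              exact hg
            · exact zero_le
    · have hnone : ∀ b : Bool, ¬ ∃ c ∈ T, b ∈ Aund c j := by
        rintro b ⟨c, hc, -⟩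
        exact hT2 ⟨c, hc⟩
      simp only [hnone, if_false]
      simp

/-! ### event descriptions -/

lemma und_iff (hn : 0 < n) (ω : {S : Finset (Fin n) // S.card = k} → Bool) :
    HasLooseHamCycle k (fun S : Finset (Fin n) => ∃ h : S.card = k, ω ⟨S, h⟩ = true) ↔
    ∃ c : CycData n k, ∀ j, ω j ∈ Aund c j := by
  constructor
  · rintro ⟨m, σ, hm, hcard, h⟩
    refine ⟨⟨m, σ, hm, hcard, fun i => (h i).1⟩, fun j i hij => ?_⟩
    subst hij
    obtain ⟨h1, h2⟩ := (h i).2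
    exact h2
  · rintro ⟨c, hc⟩
    exact ⟨c.m, c.σ, c.hm, c.hcard,
      fun i => ⟨c.hinj i, (edge c i).2, hc (edge c i) i rfl⟩⟩

lemma dir_iff (hn : 0 < n) (ω' : InjTup n k → Bool) :
    HasDirLooseHamCycle k
        (fun f : Fin k → Fin n => ∃ h : Function.Injective f, ω' ⟨f, h⟩ = true) ↔
    ∃ c : CycData n k, ∀ i, ω' (arc c i) = true := by
  constructor
  · rintro ⟨m, σ, hm, hcard, h⟩
    refine ⟨⟨m, σ, hm, hcard, fun i => (h i).1⟩, fun i => ?_⟩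
    obtain ⟨h1, h2⟩ := (h i).2
    exact h2
  · rintro ⟨c, hc⟩
    exact ⟨c.m, c.σ, c.hm, c.hcard, fun i => ⟨c.hinj i, c.hinj i, hc i⟩⟩

end MCD

/-- (McDiarmid-type coupling)  Let `k ≥ 3` and `n ≥ 1`.  For every `p ∈ (0,1)`, the
probability that `D^{(k)}_{n,p}` contains a directed loose Hamilton cycle is at least
the probability that `H^{(k)}_{n,p}` contains a loose Hamilton cycle. -/
theorem statement7 (k n : ℕ) (hk : 3 ≤ k) (hn : 0 < n) (p : ℝ)
    (hp : p ∈ Set.Ioo (0 : ℝ) 1) :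
    hyperMeasure n k p
        {ω | HasLooseHamCycle k fun S : Finset (Fin n) => ∃ h : S.card = k, ω ⟨S, h⟩ = true} ≤
      dirHyperMeasure n k p
        {ω | HasDirLooseHamCycle k fun f : Fin k → Fin n =>
          ∃ h : Function.Injective f, ω ⟨f, h⟩ = true} := by
  classical
  obtain ⟨hp0, hp1⟩ := hp
  have hp0' : (0 : ℝ) ≤ p := le_of_lt hp0
  have hp1' : p ≤ 1 := le_of_lt hp1
  simp only [hyperMeasure, dirHyperMeasure]
  rw [MCD.pi_apply_sum, MCD.pi_apply_sum]
  simp only [Set.mem_setOf_eq, MCD.bern_singleton, MCD.und_iff hn, MCD.dir_iff hn]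
  set N := Fintype.card {S : Finset (Fin n) // S.card = k} with hN
  set e : Fin N ≃ {S : Finset (Fin n) // S.card = k} :=
    (Fintype.equivFin {S : Finset (Fin n) // S.card = k}).symm with he
  -- bridge the undirected side to a `Fin N`-indexed sum
  have bridgeL :
      (∑ ω : {S : Finset (Fin n) // S.card = k} → Bool,
        if ∃ c : MCD.CycData n k, ∀ j, ω j ∈ MCD.Aund c j
          then ∏ j, MCD.w p (ω j) else 0)
      = ∑ x : Fin N → Bool,
          if ∃ c : MCD.CycData n k, ∀ j', x j' ∈ MCD.Aund c (e j')
            then ∏ j', MCD.w p (x j') else 0 := by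
    refine Fintype.sum_equiv (Equiv.arrowCongr e.symm (Equiv.refl Bool)) _ _ ?_
    intro ω
    have hcond : (∃ c : MCD.CycData n k, ∀ j, ω j ∈ MCD.Aund c j) ↔
        (∃ c : MCD.CycData n k, ∀ j', ω (e j') ∈ MCD.Aund c (e j')) := by
      constructor
      · rintro ⟨c, hc⟩; exact ⟨c, fun j' => hc (e j')⟩
      · rintro ⟨c, hc⟩
        refine ⟨c, fun j => ?_⟩
        have := hc (e.symm j)
        rwa [e.apply_symm_apply] at this
    have hprod : (∏ j, MCD.w p (ω j)) = ∏ j', MCD.w p (ω (e j')) :=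
      (Fintype.prod_equiv e (fun j' => MCD.w p (ω (e j'))) (fun j => MCD.w p (ω j))
        (fun j' => rfl)).symm
    simp only [hcond, hprod]
    rfl
  -- the reindexing equivalence for the directed side
  set E2 : (Fin N → (Equiv.Perm (Fin k) → Bool)) ≃ (InjTup n k → Bool) :=
    { toFun := fun y f => y (e.symm (MCD.imgJ f)) (MCD.permOf f)
      invFun := fun ω' j' π => ω' ((MCD.tupleEquiv n k).symm (e j', π))
      left_inv := by
        intro y
        funext j' π
        have h1 : (MCD.tupleEquiv n k) ((MCD.tupleEquiv n k).symm (e j', π)) = (e j', π) :=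
          (MCD.tupleEquiv n k).apply_symm_apply _
        have h2 : MCD.imgJ ((MCD.tupleEquiv n k).symm (e j', π)) = e j' :=
          congrArg Prod.fst h1
        have h3 : MCD.permOf ((MCD.tupleEquiv n k).symm (e j', π)) = π :=
          congrArg Prod.snd h1
        show y (e.symm (MCD.imgJ ((MCD.tupleEquiv n k).symm (e j', π))))
          (MCD.permOf ((MCD.tupleEquiv n k).symm (e j', π))) = y j' π
        rw [h2, h3, e.symm_apply_apply]
      right_inv := by
        intro ω'
        funext f
        show ω' ((MCD.tupleEquiv n k).symm (e (e.symm (MCD.imgJ f)), MCD.permOf f)) = ω' f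
        rw [e.apply_symm_apply]
        have h4 : ((MCD.imgJ f, MCD.permOf f) :
            {S : Finset (Fin n) // S.card = k} × Equiv.Perm (Fin k))
            = (MCD.tupleEquiv n k) f := rfl
        rw [h4, (MCD.tupleEquiv n k).symm_apply_apply] } with hE2
  have bridgeR :
      (∑ y : Fin N → (Equiv.Perm (Fin k) → Bool),
        if ∃ c : MCD.CycData n k, ∀ j', y j' ∈ MCD.Bdir c (e j')
          then ∏ j', ∏ π, MCD.w p (y j' π) else 0)
      = ∑ ω' : InjTup n k → Bool,
          if ∃ c : MCD.CycData n k, ∀ i, ω' (MCD.arc c i) = true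
            then ∏ i₀, MCD.w p (ω' i₀) else 0 := by
    refine Fintype.sum_equiv E2 _ _ ?_
    intro y
    have happ : ∀ c : MCD.CycData n k, ∀ i : Fin c.m,
        (E2 y) (MCD.arc c i) = y (e.symm (MCD.edge c i)) (MCD.pm c i) := fun c i => rfl
    have hcond : (∃ c : MCD.CycData n k, ∀ j', y j' ∈ MCD.Bdir c (e j')) ↔
        (∃ c : MCD.CycData n k, ∀ i, (E2 y) (MCD.arc c i) = true) := by
      constructor
      · rintro ⟨c, hc⟩
        refine ⟨c, fun i => ?_⟩
        rw [happ c i]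
        have := hc (e.symm (MCD.edge c i)) i
        rw [e.apply_symm_apply] at this
        exact this rfl
      · rintro ⟨c, hc⟩
        refine ⟨c, fun j' i hij => ?_⟩
        have := hc i
        rw [happ c i, hij, e.symm_apply_apply] at this
        exact this
    have hprod : (∏ j', ∏ π, MCD.w p (y j' π)) = ∏ i₀, MCD.w p ((E2 y) i₀) := by
      calc (∏ j', ∏ π, MCD.w p (y j' π))
          = ∏ z : {S : Finset (Fin n) // S.card = k} × Equiv.Perm (Fin k),
              MCD.w p (y (e.symm z.1) z.2) := by
            rw [Fintype.prod_prod_type]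
            exact Fintype.prod_equiv e
              (fun j' => ∏ π, MCD.w p (y j' π))
              (fun S => ∏ π, MCD.w p (y (e.symm S) π))
              (fun j' => by simp only [Equiv.symm_apply_apply])
        _ = ∏ i₀, MCD.w p ((E2 y) i₀) :=
            (Fintype.prod_equiv (MCD.tupleEquiv n k)
              (fun i₀ => MCD.w p ((E2 y) i₀))
              (fun z => MCD.w p (y (e.symm z.1) z.2))
              (fun i₀ => rfl)).symm
    simp only [hcond, hprod]
  rw [bridgeL, ← bridgeR]
  exact MCD.keyLemma N (fun _ => Bool) (fun _ => (Equiv.Perm (Fin k) → Bool))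
    (fun _ => MCD.w p) (fun _ g => ∏ π, MCD.w p (g π)) (MCD.CycData n k)
    (fun c j' => MCD.Aund c (e j')) (fun c j' => MCD.Bdir c (e j'))
    (fun j' T => MCD.hcomp hk p hp0' hp1' (e j') T)
end

section
/- Fix k ≥ 3, n, p ∈ (0,1), and an enumeration e_1,…,e_N of all k-element subsets of [n], where N = C(n,k). For 0 ≤ i ≤ N define the random directed k-uniform hypergraph Γ_i on [n] as follows: for each j ≤ i and each of the k! orderings of e_j, the corresponding arc is included with probability p independently; for each j > i, with probability p all k! orderings of e_j are included as arcs and otherwise none are, independently over j. Then for every 1 ≤ i ≤ N, the probability that Γ_i contains a directed loose Hamilton cycle is at least the probability that Γ_{i−1} contains a directed loose Hamilton cycle. -/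
open MeasureTheory Filter

/-- The `k!` orderings of a `k`-element subset `S` of `Fin n`: the injective `k`-tuples
whose image is `S`. -/
abbrev OrdOf (n k : ℕ) (S : Finset (Fin n)) :=
  {f : Fin k → Fin n // Function.Injective f ∧ Finset.image f Finset.univ = S}

/-- For an enumeration `e` of the `k`-element subsets of `Fin n` (with
`N = Nat.choose n k`), the random directed `k`-uniform hypergraph `Γ_i`:  for the first
`i` sets `e_j` (i.e. `(j : ℕ) < i`), each of the `k!` orderings of `e_j` is an arc with
probability `p` independently; for every later set, with probability `p` all of its `k!`
orderings are arcs and otherwise none, independently over the sets.  A sample point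
records, for each `k`-subset and each of its orderings, whether that arc is present. -/
noncomputable def gammaMeasure (n k : ℕ) (p : ℝ)
    (e : Fin (Nat.choose n k) ≃ {S : Finset (Fin n) // S.card = k}) (i : ℕ) :
    Measure (∀ j : Fin (Nat.choose n k), OrdOf n k (e j).1 → Bool) :=
  Measure.pi fun j =>
    if (j : ℕ) < i then Measure.pi fun _ => bern p
    else Measure.map (fun (b : Bool) (_ : OrdOf n k (e j).1) => b) (bern p)

/-- The event that `Γ_i` contains a directed loose Hamilton cycle: the arcs of the
sampled directed hypergraph are those ordered `k`-tuples appearing as a present ordering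
of some `k`-subset. -/
def gammaHamEvent (n k : ℕ)
    (e : Fin (Nat.choose n k) ≃ {S : Finset (Fin n) // S.card = k}) :
    Set (∀ j : Fin (Nat.choose n k), OrdOf n k (e j).1 → Bool) :=
  {ω | HasDirLooseHamCycle k fun f : Fin k → Fin n =>
    ∃ (j : Fin (Nat.choose n k))
      (h : Function.Injective f ∧ Finset.image f Finset.univ = (e j).1),
      ω j ⟨f, h⟩ = true}

-- auxiliary lemmas

lemma bern_isProb {p : ℝ} (h0 : 0 ≤ p) (h1 : p ≤ 1) : IsProbabilityMeasure (bern p) := by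
  constructor
  simp only [bern, Measure.add_apply, Measure.smul_apply, Measure.dirac_apply, smul_eq_mul]
  simp only [Set.mem_univ, Set.indicator_of_mem, Pi.one_apply, mul_one]
  rw [← ENNReal.ofReal_add h0 (by linarith)]
  norm_num

lemma bern_true {p : ℝ} : bern p {true} = ENNReal.ofReal p := by
  simp [bern, Measure.dirac_apply]

lemma interval_start {k c : ℕ} (hk : 3 ≤ k) (hkc : k < c) (a b : ℕ)
    (h : Finset.image (fun t : Fin k => ((a + (t : ℕ) : ℕ) : ZMod c)) Finset.univ
       = Finset.image (fun t : Fin k => ((b + (t : ℕ) : ℕ) : ZMod c)) Finset.univ) :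
    (a : ZMod c) = (b : ZMod c) := by
  haveI : NeZero c := ⟨by omega⟩
  have hb : ((b : ℕ) : ZMod c)
      ∈ Finset.image (fun t : Fin k => ((a + (t : ℕ) : ℕ) : ZMod c)) Finset.univ := by
    rw [h]
    exact Finset.mem_image.mpr ⟨⟨0, by omega⟩, Finset.mem_univ _, by norm_num⟩
  obtain ⟨t, -, ht⟩ := Finset.mem_image.mp hb
  rcases Nat.eq_zero_or_pos (t : ℕ) with h0 | h0
  · rw [← ht]; simp [h0]
  · exfalso
    have hts : (t : ℕ) ≤ k := le_of_lt t.isLt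
    have hmem : ((b + (k - (t : ℕ)) : ℕ) : ZMod c)
        ∈ Finset.image (fun t : Fin k => ((a + (t : ℕ) : ℕ) : ZMod c)) Finset.univ := by
      rw [h]
      exact Finset.mem_image.mpr ⟨⟨k - (t : ℕ), by omega⟩, Finset.mem_univ _, rfl⟩
    obtain ⟨s, -, hs⟩ := Finset.mem_image.mp hmem
    have e2 : ((s : ℕ) : ZMod c) = (k : ZMod c) := by
      have h3 : (a : ZMod c) + (s : ℕ) = (a : ZMod c) + (k : ℕ) := by
        push_cast [Nat.cast_sub hts] at hs ht
        rw [← ht] at hs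
        linear_combination hs
      exact add_left_cancel h3
    have : (s : ℕ) = k := by
      have hv := congrArg ZMod.val e2
      rwa [ZMod.val_cast_of_lt (lt_trans s.isLt hkc), ZMod.val_cast_of_lt hkc] at hv
    omega

lemma arc_start_eq {k m c : ℕ} (hk : 3 ≤ k) (hm : 0 < m) (hc : c = m * (k - 1))
    {V : Type*} [DecidableEq V] (σ : ZMod c ≃ V)
    (hinj : ∀ i : Fin m,
      Function.Injective (fun t : Fin k => σ (((i : ℕ) * (k - 1) + (t : ℕ) : ℕ))))
    {i i' : Fin m}
    (himg : Finset.image (fun t : Fin k => σ (((i : ℕ) * (k - 1) + (t : ℕ) : ℕ))) Finset.univ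
          = Finset.image (fun t : Fin k => σ (((i' : ℕ) * (k - 1) + (t : ℕ) : ℕ))) Finset.univ) :
    i = i' := by
  have hm2 : 2 ≤ m := by
    by_contra hlt
    have hm1 : m = 1 := by omega
    subst hm1
    have hc' : c = k - 1 := by omega
    have h01 : (⟨0, by omega⟩ : Fin k) ≠ ⟨k - 1, by omega⟩ := by
      simp only [ne_eq, Fin.mk.injEq]; omega
    apply h01
    apply hinj ⟨0, hm⟩
    show σ (((0 * (k - 1) + 0 : ℕ) : ZMod c)) = σ (((0 * (k - 1) + (k - 1) : ℕ) : ZMod c))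
    congr 1
    subst hc'
    simp [ZMod.natCast_self]
  have hkc : k < c := by
    have h2' : 2 * (k - 1) ≤ m * (k - 1) := Nat.mul_le_mul_right _ hm2
    omega
  have h2 : Finset.image (fun t : Fin k => (((i : ℕ) * (k - 1) + (t : ℕ) : ℕ) : ZMod c)) Finset.univ
          = Finset.image (fun t : Fin k => (((i' : ℕ) * (k - 1) + (t : ℕ) : ℕ) : ZMod c)) Finset.univ := by
    apply Finset.image_injective σ.injective
    rw [Finset.image_image, Finset.image_image]
    exact himg
  have hstart := interval_start hk hkc ((i : ℕ) * (k - 1)) ((i' : ℕ) * (k - 1)) h2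
  have hlt1 : (i : ℕ) * (k - 1) < c := by
    rw [hc]; exact (Nat.mul_lt_mul_right (by omega : 0 < k - 1)).mpr i.isLt
  have hlt2 : (i' : ℕ) * (k - 1) < c := by
    rw [hc]; exact (Nat.mul_lt_mul_right (by omega : 0 < k - 1)).mpr i'.isLt
  have hv := congrArg ZMod.val hstart
  rw [ZMod.val_cast_of_lt hlt1, ZMod.val_cast_of_lt hlt2] at hv
  exact Fin.ext (Nat.eq_of_mul_eq_mul_right (by omega) hv)

lemma bern_map_le_pi {p : ℝ} (hp0 : 0 < p) (hp1 : p < 1) {β : Type*} [Fintype β]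
    (T : Set (β → Bool))
    (hmono : ∀ v v' : β → Bool, (∀ b, v b = true → v' b = true) → v ∈ T → v' ∈ T)
    (hwit : (fun _ => true) ∈ T → (fun _ => false) ∉ T →
      ∃ f : β, ∀ v : β → Bool, v f = true → v ∈ T) :
    Measure.map (fun (b : Bool) (_ : β) => b) (bern p) T ≤
      Measure.pi (fun _ : β => bern p) T := by
  classical
  haveI : IsProbabilityMeasure (bern p) := bern_isProb hp0.le hp1.le
  by_cases hF : (fun _ : β => false) ∈ T
  · have hTuniv : T = Set.univ :=
      Set.eq_univ_of_forall fun v => hmono _ v (fun b h => by simp at h) hF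
    rw [hTuniv]
    haveI : IsProbabilityMeasure (Measure.map (fun (b : Bool) (_ : β) => b) (bern p)) :=
      Measure.isProbabilityMeasure_map (Measurable.of_discrete).aemeasurable
    haveI : IsProbabilityMeasure (Measure.pi (fun _ : β => bern p)) := inferInstance
    simp [measure_univ]
  · rw [Measure.map_apply Measurable.of_discrete .of_discrete]
    by_cases hT : (fun _ : β => true) ∈ T
    · obtain ⟨f, hf⟩ := hwit hT hF
      have hpre : (fun (b : Bool) (_ : β) => b) ⁻¹' T = {true} := by
        ext b; cases b <;> simp [Set.mem_preimage, hT, hF]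
      rw [hpre, bern_true]
      have hcube : {v : β → Bool | v f = true} ⊆ T := fun v hv => hf v hv
      refine le_trans ?_ (measure_mono hcube)
      have hset : {v : β → Bool | v f = true}
          = Set.pi Set.univ (fun b => if b = f then ({true} : Set Bool) else Set.univ) := by
        ext v
        simp only [Set.mem_setOf_eq, Set.mem_pi, Set.mem_univ, true_implies]
        constructor
        · intro h b
          by_cases hb : b = f
          · subst hb; simp [h]
          · simp [hb]
        · intro h
          have := h f
          simpa using this
      rw [hset, Measure.pi_pi]
      have : ∀ b : β, bern p (if b = f then ({true} : Set Bool) else Set.univ)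
          = if b = f then bern p {true} else 1 := by
        intro b
        by_cases hb : b = f
        · simp [hb]
        · simp only [if_neg hb]; exact measure_univ
      rw [Finset.prod_congr rfl fun b _ => this b]
      rw [Finset.prod_ite_eq' Finset.univ f (fun _ => bern p {true})]
      simp [bern_true]
    · have hpre : (fun (b : Bool) (_ : β) => b) ⁻¹' T = ∅ := by
        ext b; cases b <;> simp [Set.mem_preimage, hT, hF]
      rw [hpre]
      simp

lemma gammaHamEvent_mono {n k : ℕ}
    (e : Fin (Nat.choose n k) ≃ {S : Finset (Fin n) // S.card = k})
    {ω ω' : ∀ j : Fin (Nat.choose n k), OrdOf n k (e j).1 → Bool}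
    (h : ∀ j x, ω j x = true → ω' j x = true) (hω : ω ∈ gammaHamEvent n k e) :
    ω' ∈ gammaHamEvent n k e := by
  obtain ⟨m, σ, hm, hcard, harc⟩ := hω
  refine ⟨m, σ, hm, hcard, fun i => ⟨(harc i).1, ?_⟩⟩
  obtain ⟨j, hj, hv⟩ := (harc i).2
  exact ⟨j, hj, h _ _ hv⟩

lemma gammaHamEvent_witness {n k : ℕ} (hk : 3 ≤ k)
    (e : Fin (Nat.choose n k) ≃ {S : Finset (Fin n) // S.card = k})
    (J : Fin (Nat.choose n k)) (ω : ∀ j : Fin (Nat.choose n k), OrdOf n k (e j).1 → Bool)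
    (hω : ω ∈ gammaHamEvent n k e) (hJ : ∀ x, ω J x = true)
    (hF : Function.update ω J (fun _ => false) ∉ gammaHamEvent n k e) :
    ∃ f : OrdOf n k (e J).1, ∀ x : OrdOf n k (e J).1 → Bool, x f = true →
      Function.update ω J x ∈ gammaHamEvent n k e := by
  classical
  obtain ⟨m, σ, hm, hcard, harc⟩ := hω
  by_cases hex : ∃ i₀ : Fin m,
      Finset.image (fun t : Fin k => σ (((i₀ : ℕ) * (k - 1) + (t : ℕ) : ℕ))) Finset.univ
        = (e J).1
  · obtain ⟨i₀, hi₀⟩ := hex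
    refine ⟨⟨_, (harc i₀).1, hi₀⟩, fun x hx => ⟨m, σ, hm, hcard, fun i => ⟨(harc i).1, ?_⟩⟩⟩
    by_cases hii : i = i₀
    · subst hii
      refine ⟨J, ⟨(harc i).1, hi₀⟩, ?_⟩
      rw [Function.update_self]
      exact hx
    · obtain ⟨j, hj, hv⟩ := (harc i).2
      have hjJ : j ≠ J := by
        intro hjj
        subst hjj
        exact hii (arc_start_eq hk hm hcard σ (fun i => (harc i).1)
          (hj.2.trans hi₀.symm))
      refine ⟨j, hj, ?_⟩
      rw [Function.update_of_ne hjJ]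
      exact hv
  · exfalso
    apply hF
    refine ⟨m, σ, hm, hcard, fun i => ⟨(harc i).1, ?_⟩⟩
    obtain ⟨j, hj, hv⟩ := (harc i).2
    have hjJ : j ≠ J := fun hjj => hex ⟨i, by rw [hj.2, hjj]⟩
    refine ⟨j, hj, ?_⟩
    rw [Function.update_of_ne hjJ]
    exact hv

lemma pi_le_of_single {ι : Type*} [Fintype ι] [DecidableEq ι] {α : ι → Type*}
    [∀ j, MeasurableSpace (α j)] (μ ν : ∀ j, Measure (α j))
    [∀ j, IsProbabilityMeasure (μ j)] [∀ j, IsProbabilityMeasure (ν j)]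
    (J : ι) (hsame : ∀ j, ¬ j = J → μ j = ν j)
    (E : Set (∀ j, α j)) (hE : MeasurableSet E)
    (hinner : ∀ g : ∀ j : {j : ι // ¬ j = J}, α j,
      μ J {v : α J |
        (MeasurableEquiv.piEquivPiSubtypeProd α (fun j => j = J)).symm
          ((MeasurableEquiv.piUnique (fun j : {j : ι // j = J} => α j)).symm v, g) ∈ E}
      ≤ ν J {v : α J |
        (MeasurableEquiv.piEquivPiSubtypeProd α (fun j => j = J)).symm
          ((MeasurableEquiv.piUnique (fun j : {j : ι // j = J} => α j)).symm v, g) ∈ E}) :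
    Measure.pi μ E ≤ Measure.pi ν E := by
  set Φ := MeasurableEquiv.piEquivPiSubtypeProd α (fun j => j = J) with hΦ
  set Ψ := MeasurableEquiv.piUnique (fun j : {j : ι // j = J} => α j) with hΨ
  have key : ∀ (f : ∀ j, Measure (α j)), (∀ j, IsProbabilityMeasure (f j)) →
      Measure.pi f E = ∫⁻ g, f J (Ψ.symm ⁻¹' ((fun v => (v, g)) ⁻¹' (Φ.symm ⁻¹' E)))
        ∂(Measure.pi fun j : {j : ι // ¬ j = J} => f j) := by
    intro f hf
    haveI := hf
    have h1 := (measurePreserving_piEquivPiSubtypeProd f (fun j => j = J)).map_eq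
    have h3 := (measurePreserving_piUnique (fun j : {j : ι // j = J} => f j)).map_eq
    have h5 : ∀ T, (Measure.pi fun j : {j : ι // j = J} => f j) T = f J (Ψ.symm ⁻¹' T) := by
      intro T
      calc (Measure.pi fun j : {j : ι // j = J} => f j) T
          = (Measure.pi fun j : {j : ι // j = J} => f j) (Ψ ⁻¹' (Ψ.symm ⁻¹' T)) := by
            congr 1; ext x; simp
        _ = Measure.map Ψ (Measure.pi fun j : {j : ι // j = J} => f j) (Ψ.symm ⁻¹' T) :=
            (MeasurableEquiv.map_apply Ψ _).symm
        _ = f J (Ψ.symm ⁻¹' T) := by rw [hΨ, h3]; rfl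
    calc Measure.pi f E = Measure.pi f (Φ ⁻¹' (Φ.symm ⁻¹' E)) := by
          congr 1; ext ω; simp
      _ = Measure.map Φ (Measure.pi f) (Φ.symm ⁻¹' E) := (MeasurableEquiv.map_apply Φ _).symm
      _ = ((Measure.pi fun j : {j : ι // j = J} => f j).prod
            (Measure.pi fun j : {j : ι // ¬ j = J} => f j)) (Φ.symm ⁻¹' E) := by
          rw [hΦ, h1]; congr!
      _ = ∫⁻ g, (Measure.pi fun j : {j : ι // j = J} => f j)
            ((fun v => (v, g)) ⁻¹' (Φ.symm ⁻¹' E))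
            ∂(Measure.pi fun j : {j : ι // ¬ j = J} => f j) :=
          Measure.prod_apply_symm (Φ.symm.measurable hE)
      _ = ∫⁻ g, f J (Ψ.symm ⁻¹' ((fun v => (v, g)) ⁻¹' (Φ.symm ⁻¹' E)))
            ∂(Measure.pi fun j : {j : ι // ¬ j = J} => f j) := by
          apply lintegral_congr
          intro g
          rw [h5]
  rw [key μ inferInstance, key ν inferInstance]
  have houter : (fun j : {j : ι // ¬ j = J} => μ j) = (fun j : {j : ι // ¬ j = J} => ν j) := by
    funext j
    exact hsame j.1 j.2
  rw [houter]
  exact lintegral_mono fun g => hinner g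

/-- In the interpolation `Γ_0 = H^{(k)}_{n,p}, Γ_1, …, Γ_N = D^{(k)}_{n,p}` (where
`N = C(n,k)`), for every `1 ≤ i ≤ N` the probability that `Γ_i` contains a directed
loose Hamilton cycle is at least the corresponding probability for `Γ_{i-1}`. -/
theorem statement10 (n k : ℕ) (hk : 3 ≤ k) (p : ℝ) (hp : p ∈ Set.Ioo (0 : ℝ) 1)
    (e : Fin (Nat.choose n k) ≃ {S : Finset (Fin n) // S.card = k})
    (i : ℕ) (hi1 : 1 ≤ i) (hiN : i ≤ Nat.choose n k) :
    gammaMeasure n k p e (i - 1) (gammaHamEvent n k e) ≤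
      gammaMeasure n k p e i (gammaHamEvent n k e) := by
  obtain ⟨hp0, hp1⟩ := hp
  haveI hbp : IsProbabilityMeasure (bern p) := bern_isProb hp0.le hp1.le
  have hJlt : i - 1 < Nat.choose n k := lt_of_lt_of_le (by omega) hiN
  set J : Fin (Nat.choose n k) := ⟨i - 1, hJlt⟩ with hJdef
  haveI hPμ : ∀ j : Fin (Nat.choose n k), IsProbabilityMeasure
      (if (j : ℕ) < i - 1 then (Measure.pi fun _ : OrdOf n k (e j).1 => bern p)
        else Measure.map (fun (b : Bool) (_ : OrdOf n k (e j).1) => b) (bern p)) := by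
    intro j
    split
    · infer_instance
    · exact Measure.isProbabilityMeasure_map Measurable.of_discrete.aemeasurable
  haveI hPν : ∀ j : Fin (Nat.choose n k), IsProbabilityMeasure
      (if (j : ℕ) < i then (Measure.pi fun _ : OrdOf n k (e j).1 => bern p)
        else Measure.map (fun (b : Bool) (_ : OrdOf n k (e j).1) => b) (bern p)) := by
    intro j
    split
    · infer_instance
    · exact Measure.isProbabilityMeasure_map Measurable.of_discrete.aemeasurable
  unfold gammaMeasure
  refine pi_le_of_single _ _ J (fun j hj => ?_) _ .of_discrete (fun g => ?_)
  · have hne : (j : ℕ) ≠ i - 1 := fun h => hj (Fin.ext h)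
    exact if_congr (by omega) rfl rfl
  · have hJv : (J : ℕ) = i - 1 := rfl
    rw [if_neg (by omega), if_pos (by omega)]
    set Φ := MeasurableEquiv.piEquivPiSubtypeProd
      (fun j : Fin (Nat.choose n k) => OrdOf n k (e j).1 → Bool) (fun j => j = J) with hΦ
    set Ψ := MeasurableEquiv.piUnique
      (fun j : {j : Fin (Nat.choose n k) // j = J} => OrdOf n k (e j.1).1 → Bool) with hΨ
    have happly : ∀ (a : ∀ jj : {jj : Fin (Nat.choose n k) // jj = J}, OrdOf n k (e jj.1).1 → Bool)
        (j : Fin (Nat.choose n k)),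
        Φ.symm (a, g) j = if h : j = J then a ⟨j, h⟩ else g ⟨j, h⟩ := fun a j => rfl
    have hA : ∀ v : OrdOf n k (e J).1 → Bool, Φ.symm (Ψ.symm v, g) J = v := by
      intro v
      rw [happly, dif_pos rfl]; rfl
    have hB : ∀ (v : OrdOf n k (e J).1 → Bool) (j : Fin (Nat.choose n k)) (hj : ¬ j = J),
        Φ.symm (Ψ.symm v, g) j = g ⟨j, hj⟩ := by
      intro v j hj
      rw [happly, dif_neg hj]
    set ω : ∀ j : Fin (Nat.choose n k), OrdOf n k (e j).1 → Bool :=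
      Φ.symm (Ψ.symm (fun _ => true), g) with hω
    have hupdate : ∀ v : OrdOf n k (e J).1 → Bool,
        Function.update ω J v = Φ.symm (Ψ.symm v, g) := by
      intro v
      funext j
      by_cases hj : j = J
      · subst hj
        rw [Function.update_self]
        exact (hA v).symm
      · rw [Function.update_of_ne hj, hω, hB _ _ hj, hB _ _ hj]
    apply bern_map_le_pi hp0 hp1
    · intro v v' hvv hv
      refine gammaHamEvent_mono e (ω := Φ.symm (Ψ.symm v, g)) ?_ hv
      intro j x
      by_cases hj : j = J
      · subst hj
        rw [hA v, hA v']
        exact hvv x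
      · rw [hB _ _ hj, hB _ _ hj]
        exact id
    · intro hT hF
      have hωmem : ω ∈ gammaHamEvent n k e := hT
      have hωJ : ∀ x, ω J x = true := fun x => congrFun (hA (fun _ => true)) x
      have hωF : Function.update ω J (fun _ => false) ∉ gammaHamEvent n k e := by
        rw [hupdate]
        exact hF
      obtain ⟨f, hf⟩ := gammaHamEvent_witness hk e J ω hωmem hωJ hωF
      refine ⟨f, fun v hvf => ?_⟩
      have := hf v hvf
      rwa [hupdate] at this
end

section
/- Let k ≥ 3, let e* = {x_1,…,x_k} be a k-element subset of [n] with a fixed ordering (x_1,…,x_k), and let H be a k-uniform directed hypergraph on [n] containing the set e* as an edge (in the sense that some hypergraph H_0 on [n] contains e*). Let V* = ([n] \ {x_1,…,x_k}) ∪ {e*}, and let D be the directed k-uniform hypergraph on V* whose arcs are those arcs e of H satisfying one of: e ∩ e* = ∅; e ∩ e* = {x_1} and x_1 is not the first vertex of e (with x_1 replaced by the vertex e* in the arc); or e ∩ e* = {x_k} and x_k is the first vertex of e (with x_k replaced by the vertex e*). If D contains a directed loose Hamilton cycle in which the vertex e* occurs as a starting or ending vertex of the arcs containing it, then the undirected hypergraph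 on [n] consisting of the edge e* together with the underlying unordered edges of H contains a loose Hamilton cycle. -/
/-- Auxiliary vertex-ordering map for the Hamilton cycle on `Fin n`. -/
def myTau {n k Nc : ℕ} (hk : 3 ≤ k) (x : Fin k → Fin n)
    (σ : ZMod Nc ≃ Option {v : Fin n // v ∉ Finset.image x Finset.univ}) :
    ZMod n → Fin n := fun j =>
  if hj : j.val < k - 1 then x ⟨j.val, by omega⟩
  else (σ (((j.val - (k - 1) : ℕ) : ZMod Nc))).elim (x ⟨k - 1, by omega⟩) (fun v => v.1)

lemma myTau_small {n k Nc : ℕ} (hk : 3 ≤ k) (x : Fin k → Fin n)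
    (σ : ZMod Nc ≃ Option {v : Fin n // v ∉ Finset.image x Finset.univ})
    (j : ZMod n) (hj : j.val < k - 1) :
    myTau hk x σ j = x ⟨j.val, by omega⟩ := dif_pos hj

lemma myTau_big {n k Nc : ℕ} (hk : 3 ≤ k) (x : Fin k → Fin n)
    (σ : ZMod Nc ≃ Option {v : Fin n // v ∉ Finset.image x Finset.univ})
    (j : ZMod n) (hj : ¬ j.val < k - 1) :
    myTau hk x σ j =
      (σ (((j.val - (k - 1) : ℕ) : ZMod Nc))).elim (x ⟨k - 1, by omega⟩) (fun v => v.1) :=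
  dif_neg hj

lemma myTau_inj {n k Nc : ℕ} (hk : 3 ≤ k) (hn : n = Nc + (k - 1)) (hNc : 0 < Nc)
    (x : Fin k → Fin n) (hx : Function.Injective x)
    (σ : ZMod Nc ≃ Option {v : Fin n // v ∉ Finset.image x Finset.univ}) :
    Function.Injective (myTau hk x σ) := by
  haveI : NeZero n := ⟨by omega⟩
  haveI : NeZero Nc := ⟨by omega⟩
  have hximg : ∀ j : Fin k, x j ∈ Finset.image x Finset.univ :=
    fun j => Finset.mem_image_of_mem x (Finset.mem_univ j)
  intro a b hab
  have hav := ZMod.val_lt a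
  have hbv := ZMod.val_lt b
  apply ZMod.val_injective
  by_cases ha : a.val < k - 1 <;> by_cases hb : b.val < k - 1
  · rw [myTau_small hk x σ a ha, myTau_small hk x σ b hb] at hab
    exact Fin.mk.injEq _ _ _ _ ▸ (hx hab)
  · rw [myTau_small hk x σ a ha, myTau_big hk x σ b hb] at hab
    rcases hσb : σ (((b.val - (k - 1) : ℕ) : ZMod Nc)) with _ | v
    · rw [hσb] at hab
      simp only [Option.elim_none] at hab
      have := hx hab
      simp only [Fin.mk.injEq] at this
      omega
    · rw [hσb] at hab
      simp only [Option.elim_some] at hab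
      exact absurd (hab ▸ hximg _) v.2
  · rw [myTau_big hk x σ a ha, myTau_small hk x σ b hb] at hab
    rcases hσa : σ (((a.val - (k - 1) : ℕ) : ZMod Nc)) with _ | v
    · rw [hσa] at hab
      simp only [Option.elim_none] at hab
      have := hx hab
      simp only [Fin.mk.injEq] at this
      omega
    · rw [hσa] at hab
      simp only [Option.elim_some] at hab
      exact absurd (hab.symm ▸ hximg _) v.2
  · rw [myTau_big hk x σ a ha, myTau_big hk x σ b hb] at hab
    have key : ((a.val - (k - 1) : ℕ) : ZMod Nc) = ((b.val - (k - 1) : ℕ) : ZMod Nc) → a.val = b.val := by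
      intro h
      have h1 : ((a.val - (k - 1) : ℕ) : ZMod Nc).val = a.val - (k - 1) :=
        ZMod.val_natCast_of_lt (by omega)
      have h2 : ((b.val - (k - 1) : ℕ) : ZMod Nc).val = b.val - (k - 1) :=
        ZMod.val_natCast_of_lt (by omega)
      have := h1 ▸ h2 ▸ congrArg ZMod.val h
      omega
    rcases hσa : σ (((a.val - (k - 1) : ℕ) : ZMod Nc)) with _ | v <;>
      rcases hσb : σ (((b.val - (k - 1) : ℕ) : ZMod Nc)) with _ | w <;>
      rw [hσa, hσb] at hab <;>
      simp only [Option.elim_some, Option.elim_none] at hab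
    · exact key (σ.injective (hσa.trans hσb.symm))
    · exact absurd (hab ▸ hximg _) w.2
    · exact absurd (hab.symm ▸ hximg _) v.2
    · have : v = w := Subtype.ext hab
      exact key (σ.injective (hσa.trans (this ▸ hσb.symm)))

lemma myInjHelper {n k : ℕ} (x : Fin k → Fin n) (f : Fin k → Fin n)
    (g : Fin k → Option {v : Fin n // v ∉ Finset.image x Finset.univ})
    (hg : Function.Injective g) (t0 : Fin k) (hmem : f t0 ∈ Finset.image x Finset.univ)
    (hrest : ∀ t, t ≠ t0 → ∃ h : f t ∉ Finset.image x Finset.univ, g t = some ⟨f t, h⟩) :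
    Function.Injective f := by
  intro a b hab
  by_cases ha : a = t0 <;> by_cases hb : b = t0
  · rw [ha, hb]
  · subst ha
    obtain ⟨h, _⟩ := hrest b hb
    exact absurd (hab ▸ hmem) h
  · subst hb
    obtain ⟨h, _⟩ := hrest a ha
    exact absurd (hab.symm ▸ hmem) h
  · obtain ⟨h1, hg1⟩ := hrest a ha
    obtain ⟨h2, hg2⟩ := hrest b hb
    apply hg
    rw [hg1, hg2]
    exact congrArg some (Subtype.ext hab)

lemma myInjHelper' {n k : ℕ} (x : Fin k → Fin n) (f : Fin k → Fin n)
    (g : Fin k → Option {v : Fin n // v ∉ Finset.image x Finset.univ})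
    (hg : Function.Injective g)
    (hall : ∀ t, ∃ h : f t ∉ Finset.image x Finset.univ, g t = some ⟨f t, h⟩) :
    Function.Injective f := by
  intro a b hab
  obtain ⟨h1, hg1⟩ := hall a
  obtain ⟨h2, hg2⟩ := hall b
  apply hg
  rw [hg1, hg2]
  exact congrArg some (Subtype.ext hab)

lemma hamCycle_of_card_eq {k : ℕ} {V : Type*} [Fintype V] [DecidableEq V]
    (E : Finset V → Prop) {N : ℕ} (hN : Fintype.card V = N) (m : ℕ) (σ : ZMod N ≃ V)
    (hm : 0 < m) (hc : N = m * (k - 1))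
    (h : ∀ i : Fin m,
      Function.Injective (fun t : Fin k => σ (((i : ℕ) * (k - 1) + (t : ℕ) : ℕ))) ∧
      E (Finset.image (fun t : Fin k => σ (((i : ℕ) * (k - 1) + (t : ℕ) : ℕ))) Finset.univ)) :
    HasLooseHamCycle k E := by
  subst hN
  exact ⟨m, σ, hm, hc, h⟩

/-- Let `k ≥ 3`, let `e* = {x 0, …, x (k-1)}` be a `k`-element subset of `Fin n` with a
fixed ordering `x`, and let `A` be the arc predicate of a directed `k`-uniform
hypergraph `H` on `Fin n`.  Let `V* = (Fin n \ e*) ∪ {e*}` (modelled as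
`Option {v // v ∉ e*}`, where `none` is the new vertex `e*`), and let `D` (with arc
predicate `DA`) be the directed `k`-uniform hypergraph on `V*` whose arcs are those arcs
`f` of `H` such that either `f` avoids `e*`, or `f` meets `e*` exactly in `x 0` with
`x 0` not the first vertex of `f` (with `x 0` replaced by the new vertex `e*`), or `f`
meets `e*` exactly in `x (k-1)` with `x (k-1)` the first vertex of `f` (with `x (k-1)`
replaced by `e*`).  If `D` contains a directed loose Hamilton cycle in which the vertex
`e*` occurs as a starting or ending vertex of the arcs containing it, then the
undirected hypergraph on `Fin n` whose edges are `e*` together with the underlying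
unordered edges of `H` contains a loose Hamilton cycle. -/
theorem statement12 (n k : ℕ) (hk : 3 ≤ k) (x : Fin k → Fin n)
    (hx : Function.Injective x) (A : (Fin k → Fin n) → Prop)
    (DA : (Fin k → Option {v : Fin n // v ∉ Finset.image x Finset.univ}) → Prop)
    (hDA : ∀ g, DA g ↔ ∃ f : Fin k → Fin n, A f ∧
      ((∀ t : Fin k, ∃ h : f t ∉ Finset.image x Finset.univ, g t = some ⟨f t, h⟩) ∨
       (∃ t0 : Fin k, t0 ≠ ⟨0, by omega⟩ ∧ f t0 = x ⟨0, by omega⟩ ∧ g t0 = none ∧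
          ∀ t : Fin k, t ≠ t0 →
            ∃ h : f t ∉ Finset.image x Finset.univ, g t = some ⟨f t, h⟩) ∨
       (f ⟨0, by omega⟩ = x ⟨k - 1, by omega⟩ ∧ g ⟨0, by omega⟩ = none ∧
          ∀ t : Fin k, t ≠ ⟨0, by omega⟩ →
            ∃ h : f t ∉ Finset.image x Finset.univ, g t = some ⟨f t, h⟩)))
    (hD : ∃ (m : ℕ)
        (σ : ZMod (Fintype.card (Option {v : Fin n // v ∉ Finset.image x Finset.univ})) ≃
          Option {v : Fin n // v ∉ Finset.image x Finset.univ}),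
      0 < m ∧
      Fintype.card (Option {v : Fin n // v ∉ Finset.image x Finset.univ}) = m * (k - 1) ∧
      (∀ i : Fin m,
        Function.Injective (fun t : Fin k => σ (((i : ℕ) * (k - 1) + (t : ℕ) : ℕ))) ∧
        DA (fun t : Fin k => σ (((i : ℕ) * (k - 1) + (t : ℕ) : ℕ)))) ∧
      (∃ i : Fin m, σ (((i : ℕ) * (k - 1) : ℕ)) = none)) :
    HasLooseHamCycle k (fun S : Finset (Fin n) =>
      S = Finset.image x Finset.univ ∨ ∃ f, A f ∧ S = Finset.image f Finset.univ) := by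
  classical
  set Nc := Fintype.card (Option {v : Fin n // v ∉ Finset.image x Finset.univ}) with hNcdef
  obtain ⟨m, σ0, hm, hcard, harcs0, i0, hi00⟩ := hD
  have hximg : ∀ j : Fin k, x j ∈ Finset.image x Finset.univ :=
    fun j => Finset.mem_image_of_mem x (Finset.mem_univ j)
  have hkn : k ≤ n := by
    have h := Fintype.card_le_of_injective x hx
    simpa using h
  have hcardW : Fintype.card {v : Fin n // v ∉ Finset.image x Finset.univ} = n - k := by
    rw [Fintype.card_subtype_compl, Fintype.card_fin]
    congr 1
    convert Fintype.card_coe (Finset.image x Finset.univ) using 2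
    simp [Finset.card_image_of_injective _ hx]
  have hNc : Nc = n - k + 1 := by
    rw [hNcdef, Fintype.card_option, hcardW]
  have e1 : (m + 1) * (k - 1) = m * (k - 1) + (k - 1) := by ring
  have hn : n = (m + 1) * (k - 1) := by omega
  have hNpos : 0 < Nc := by omega
  haveI : NeZero n := ⟨by omega⟩
  haveI : NeZero Nc := ⟨by omega⟩
  set c : ZMod Nc := (((i0 : ℕ) * (k - 1) : ℕ) : ZMod Nc) with hcdef
  set σ : ZMod Nc ≃ Option {v : Fin n // v ∉ Finset.image x Finset.univ} :=
    (Equiv.addRight c).trans σ0 with hσdef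
  have hσapp : ∀ z : ZMod Nc, σ z = σ0 (z + c) := fun z => rfl
  have hσ0 : σ 0 = none := by rw [hσapp, zero_add]; exact hi00
  have hNzero : ((m * (k - 1) : ℕ) : ZMod Nc) = 0 := by
    rw [← hcard]; exact ZMod.natCast_self Nc
  have hmodarith : ∀ a t : ℕ,
      ((a * (k - 1) + t : ℕ) : ZMod Nc) = (((a % m) * (k - 1) + t : ℕ) : ZMod Nc) := by
    intro a t
    conv_lhs => rw [← Nat.div_add_mod a m]
    push_cast
    push_cast at hNzero
    linear_combination ((a / m : ℕ) : ZMod Nc) * hNzero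
  have harcs : ∀ i : Fin m,
      Function.Injective (fun t : Fin k => σ (((i : ℕ) * (k - 1) + (t : ℕ) : ℕ))) ∧
      DA (fun t : Fin k => σ (((i : ℕ) * (k - 1) + (t : ℕ) : ℕ))) := by
    intro i
    have hi' : ((i : ℕ) + (i0 : ℕ)) % m < m := Nat.mod_lt _ hm
    have heq : (fun t : Fin k => σ (((i : ℕ) * (k - 1) + (t : ℕ) : ℕ))) =
        (fun t : Fin k =>
          σ0 ((((⟨((i : ℕ) + (i0 : ℕ)) % m, hi'⟩ : Fin m) : ℕ) * (k - 1) + (t : ℕ) : ℕ))) := by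
      funext t
      rw [hσapp, hcdef, ← Nat.cast_add]
      rw [show (i : ℕ) * (k - 1) + (t : ℕ) + (i0 : ℕ) * (k - 1)
          = ((i : ℕ) + (i0 : ℕ)) * (k - 1) + (t : ℕ) by ring]
      rw [hmodarith]
    rw [heq]
    exact harcs0 ⟨_, hi'⟩
  set τ : ZMod n → Fin n := myTau hk x σ with hτdef
  have hτinj : Function.Injective τ := myTau_inj hk (by omega) hNpos x hx σ
  have hτbij : Function.Bijective τ := by
    rw [Fintype.bijective_iff_injective_and_card]
    exact ⟨hτinj, by rw [ZMod.card, Fintype.card_fin]⟩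
  have hmulle : ∀ a b : ℕ, a ≤ b → a * (k - 1) ≤ b * (k - 1) :=
    fun a b h => Nat.mul_le_mul_right _ h
  have hsplit : ∀ a : ℕ, 1 ≤ a → a * (k - 1) = (a - 1) * (k - 1) + (k - 1) := by
    intro a ha
    rcases a with _ | a'
    · omega
    · simp [Nat.succ_sub_one, Nat.succ_mul]
  have hwrap : τ (((m * (k - 1) + (k - 1) : ℕ) : ZMod n)) = x ⟨0, by omega⟩ := by
    have h0 : ((m * (k - 1) + (k - 1) : ℕ) : ZMod n) = 0 := by
      rw [show m * (k - 1) + (k - 1) = n by omega]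
      exact ZMod.natCast_self n
    rw [h0, hτdef, myTau_small hk x σ 0 (by rw [ZMod.val_zero]; omega)]
    exact congrArg x (Fin.ext ZMod.val_zero)
  have hcompute : ∀ (i : Fin (m + 1)) (t : Fin k), 1 ≤ (i : ℕ) →
      ¬((i : ℕ) = m ∧ (t : ℕ) = k - 1) →
      τ ((((i : ℕ) * (k - 1) + (t : ℕ) : ℕ) : ZMod n)) =
        (σ (((((i : ℕ) - 1) * (k - 1) + (t : ℕ) : ℕ) : ZMod Nc))).elim
          (x ⟨k - 1, by omega⟩) (fun v => v.1) := by
    intro i t hi1 hnw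
    have hik : (i : ℕ) ≤ m := by have := i.isLt; omega
    have htk : (t : ℕ) ≤ k - 1 := by have := t.isLt; omega
    have hp : (i : ℕ) * (k - 1) + (t : ℕ) < n := by
      rcases Nat.lt_or_ge (i : ℕ) m with h | h
      · have h2 : (i : ℕ) * (k - 1) ≤ (m - 1) * (k - 1) := hmulle _ _ (by omega)
        have h3 := hsplit m (by omega)
        omega
      · have him : (i : ℕ) = m := by omega
        have ht : (t : ℕ) < k - 1 := by
          rcases Nat.lt_or_ge (t : ℕ) (k - 1) with h' | h'
          · exact h'
          · exact absurd ⟨him, by omega⟩ hnw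
        have heqm : (i : ℕ) * (k - 1) = m * (k - 1) := by rw [him]
        omega
    have hval : ((((i : ℕ) * (k - 1) + (t : ℕ) : ℕ) : ZMod n)).val
        = (i : ℕ) * (k - 1) + (t : ℕ) := ZMod.val_natCast_of_lt hp
    have hge : ¬ ((((i : ℕ) * (k - 1) + (t : ℕ) : ℕ) : ZMod n)).val < k - 1 := by
      rw [hval]
      have h1 : 1 * (k - 1) ≤ (i : ℕ) * (k - 1) := hmulle _ _ hi1
      omega
    rw [hτdef, myTau_big hk x σ _ hge, hval]
    rw [show (i : ℕ) * (k - 1) + (t : ℕ) - (k - 1) = ((i : ℕ) - 1) * (k - 1) + (t : ℕ) from by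
      have := hsplit (i : ℕ) hi1; omega]
  have hnonecast : ∀ q : ℕ, q ≤ m * (k - 1) → ((q : ℕ) : ZMod Nc) = 0 →
      q = 0 ∨ q = m * (k - 1) := by
    intro q hq h0
    have hM : 1 ≤ m * (k - 1) := by omega
    rw [ZMod.natCast_eq_zero_iff, hcard] at h0
    obtain ⟨cq, rfl⟩ := h0
    rcases Nat.lt_or_ge cq 2 with h | h
    · interval_cases cq
      · left; simp
      · right; simp
    · exfalso
      have h2 : m * (k - 1) * 2 ≤ m * (k - 1) * cq := Nat.mul_le_mul_left _ h
      omega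
  have key : ∀ i : Fin (m + 1), ∃ f : Fin k → Fin n,
      (fun t : Fin k => τ ((((i : ℕ) * (k - 1) + (t : ℕ) : ℕ) : ZMod n))) = f ∧
      Function.Injective f ∧
      (Finset.image f Finset.univ = Finset.image x Finset.univ ∨
        ∃ f', A f' ∧ Finset.image f Finset.univ = Finset.image f' Finset.univ) := by
    intro i
    rcases Nat.eq_zero_or_pos (i : ℕ) with hi0' | hi1
    · refine ⟨x, ?_, hx, Or.inl rfl⟩
      funext t
      rw [hi0', zero_mul, zero_add]
      rcases Nat.lt_or_ge (t : ℕ) (k - 1) with ht | ht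
      · have hval : (((t : ℕ) : ℕ) : ZMod n).val = (t : ℕ) :=
          ZMod.val_natCast_of_lt (by omega)
        rw [hτdef, myTau_small hk x σ _ (by rw [hval]; omega)]
        exact congrArg x (Fin.ext hval)
      · have htk : (t : ℕ) = k - 1 := by have := t.isLt; omega
        have hval : (((t : ℕ) : ℕ) : ZMod n).val = (t : ℕ) :=
          ZMod.val_natCast_of_lt (by omega)
        rw [hτdef, myTau_big hk x σ _ (by rw [hval]; omega), hval]
        rw [show (t : ℕ) - (k - 1) = 0 by omega, Nat.cast_zero, hσ0]
        simp only [Option.elim_none]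
        exact congrArg x (Fin.ext htk.symm)
    · set j : Fin m := ⟨(i : ℕ) - 1, by have := i.isLt; omega⟩ with hjdef
      obtain ⟨hginj, hDAg⟩ := harcs j
      rw [hDA] at hDAg
      obtain ⟨f, hAf, hcases⟩ := hDAg
      have hqle : ∀ t : Fin k, ((i : ℕ) - 1) * (k - 1) + (t : ℕ) ≤ m * (k - 1) := by
        intro t
        have h1 : ((i : ℕ) - 1) * (k - 1) ≤ (m - 1) * (k - 1) :=
          hmulle _ _ (by have := i.isLt; omega)
        have h2 := hsplit m (by omega)
        have := t.isLt; omega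
      have hgnone : ∀ t : Fin k, (i : ℕ) = m → (t : ℕ) = k - 1 →
          σ ((((i : ℕ) - 1) * (k - 1) + (t : ℕ) : ℕ) : ZMod Nc) = none := by
        intro t him htk
        rw [show ((i : ℕ) - 1) * (k - 1) + (t : ℕ) = m * (k - 1) from by
          rw [him, htk]; exact (hsplit m (by omega)).symm]
        rw [hNzero]
        exact hσ0
      rcases hcases with h1 | h2 | h3
      · refine ⟨f, ?_, myInjHelper' x f _ hginj h1, Or.inr ⟨f, hAf, rfl⟩⟩
        funext t
        obtain ⟨hmem, hgt⟩ := h1 t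
        have hgt' : σ ((((i : ℕ) - 1) * (k - 1) + (t : ℕ) : ℕ) : ZMod Nc)
            = some ⟨f t, hmem⟩ := hgt
        have hnw : ¬((i : ℕ) = m ∧ (t : ℕ) = k - 1) := by
          rintro ⟨him, htk⟩
          have hnn := hgnone t him htk
          rw [hgt'] at hnn
          exact Option.some_ne_none _ hnn
        rw [hcompute i t hi1 hnw, hgt']
        rfl
      · obtain ⟨t0, ht0ne, hft0, hgt0, hrest⟩ := h2
        have hgt0' : σ ((((i : ℕ) - 1) * (k - 1) + (t0 : ℕ) : ℕ) : ZMod Nc) = none := hgt0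
        have hq0 := hnonecast _ (hqle t0) (σ.injective (hgt0'.trans hσ0.symm))
        have ht0pos : 0 < (t0 : ℕ) := by
          rcases Nat.eq_zero_or_pos (t0 : ℕ) with h | h
          · exact absurd (Fin.ext h) ht0ne
          · exact h
        have hmain : (i : ℕ) = m ∧ (t0 : ℕ) = k - 1 := by
          rcases hq0 with h | h
          · omega
          · have ha1 : ((i : ℕ) - 1) * (k - 1) ≤ (m - 1) * (k - 1) :=
              hmulle _ _ (by have := i.isLt; omega)
            have ha2 := hsplit m (by omega)
            have ht0k : (t0 : ℕ) ≤ k - 1 := by have := t0.isLt; omega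
            have htk1 : (t0 : ℕ) = k - 1 := by omega
            refine ⟨?_, htk1⟩
            have he : ((i : ℕ) - 1) * (k - 1) = (m - 1) * (k - 1) := by omega
            have := Nat.eq_of_mul_eq_mul_right (show 0 < k - 1 by omega) he
            have := i.isLt; omega
        refine ⟨f, ?_, myInjHelper x f _ hginj t0 (by rw [hft0]; exact hximg _) hrest,
          Or.inr ⟨f, hAf, rfl⟩⟩
        funext t
        by_cases ht : t = t0
        · subst ht
          rw [show (((i : ℕ) * (k - 1) + (t : ℕ) : ℕ) : ZMod n)
              = ((m * (k - 1) + (k - 1) : ℕ) : ZMod n) from by rw [hmain.1, hmain.2]]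
          rw [hwrap]
          exact hft0.symm
        · obtain ⟨hmem, hgt⟩ := hrest t ht
          have hgt' : σ ((((i : ℕ) - 1) * (k - 1) + (t : ℕ) : ℕ) : ZMod Nc)
              = some ⟨f t, hmem⟩ := hgt
          have hnw : ¬((i : ℕ) = m ∧ (t : ℕ) = k - 1) := by
            rintro ⟨him, htk⟩
            exact ht (Fin.ext (htk.trans hmain.2.symm))
          rw [hcompute i t hi1 hnw, hgt']
          rfl
      · obtain ⟨hf0, hg0, hrest⟩ := h3
        have hz : 0 < k := by omega
        set z0 : Fin k := ⟨0, hz⟩ with hz0def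
        have hzv : (z0 : ℕ) = 0 := rfl
        have hf0' : f z0 = x ⟨k - 1, by omega⟩ := hf0
        have hrest' : ∀ t : Fin k, t ≠ z0 →
            ∃ h : f t ∉ Finset.image x Finset.univ,
              σ ((((i : ℕ) - 1) * (k - 1) + (t : ℕ) : ℕ) : ZMod Nc) = some ⟨f t, h⟩ :=
          fun t ht => hrest t ht
        have hg0' : σ ((((i : ℕ) - 1) * (k - 1) + (z0 : ℕ) : ℕ) : ZMod Nc) = none := hg0
        have hq0 := hnonecast _ (hqle z0) (σ.injective (hg0'.trans hσ0.symm))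
        have hi1' : (i : ℕ) = 1 := by
          rcases hq0 with h | h
          · rcases Nat.mul_eq_zero.mp
              (by omega : ((i : ℕ) - 1) * (k - 1) = 0) with h' | h' <;> omega
          · exfalso
            have ha1 : ((i : ℕ) - 1) * (k - 1) ≤ (m - 1) * (k - 1) :=
              hmulle _ _ (by have := i.isLt; omega)
            have ha2 := hsplit m (by omega)
            omega
        have hmem0 : f z0 ∈ Finset.image x Finset.univ := by
          rw [hf0']; exact hximg _
        refine ⟨f, ?_, myInjHelper x f _ hginj z0 hmem0 hrest', Or.inr ⟨f, hAf, rfl⟩⟩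
        funext t
        by_cases ht : t = z0
        · rw [ht]
          have hnw : ¬((i : ℕ) = m ∧ (z0 : ℕ) = k - 1) := by
            rintro ⟨_, hcontra⟩
            rw [hzv] at hcontra
            omega
          rw [hcompute i z0 hi1 hnw, hg0']
          simp only [Option.elim_none]
          exact hf0'.symm
        · obtain ⟨hmem, hgt⟩ := hrest' t ht
          have hnw : ¬((i : ℕ) = m ∧ (t : ℕ) = k - 1) := by
            rintro ⟨him, htk⟩
            have hnn := hgnone t him htk
            rw [hgt] at hnn
            exact Option.some_ne_none _ hnn
          rw [hcompute i t hi1 hnw, hgt]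
          rfl
  apply hamCycle_of_card_eq _ (Fintype.card_fin n) (m + 1) (Equiv.ofBijective τ hτbij)
    (by omega) hn
  intro i
  obtain ⟨f, hfun, hfinj, hfE⟩ := key i
  have hco : (fun t : Fin k =>
      (Equiv.ofBijective τ hτbij) ((((i : ℕ) * (k - 1) + (t : ℕ) : ℕ) : ZMod n))) = f := hfun
  constructor
  · rw [hco]; exact hfinj
  · rw [hco]; exact hfE
end

section
/- Let x, y be two distinct vertices of [n], let c_1 ∈ [n] be a color, and let G be an arc-colored directed graph on [n]. Define V* = ([n] \ {x,y}) ∪ {e*} for a new vertex e*, and let D be the arc-colored directed graph on V* whose arcs are those arcs (u,v) of G whose color differs from c_1 and which satisfy one of: {u,v} ∩ {x,y} = ∅; v = x (with x replaced by e*); or u = y (with y replaced by e*). If D contains a rainbow directed Hamilton cycle, then the edge-colored graph on [n] obtained from the underlying undirected edges of G together with the edge {x,y} colored c_1 contains a rainbow Hamilton cycle. -/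
/-- Let `x ≠ y` be two vertices of `Fin n`, let `c1` be a color, and let `G` be an
arc-colored directed graph on `Fin n` (for an ordered pair `(u,v)` of distinct vertices,
`G u v = some c` means that `(u,v)` is an arc of color `c`, and `G u v = none` means
that `(u,v)` is not an arc).  Let `V* = (Fin n \ {x,y}) ∪ {e*}` for a new vertex `e*`
(modelled as `Option {v // v ≠ x ∧ v ≠ y}`, where `none` is `e*`), and let `D` be the
arc-colored directed graph on `V*` whose arcs are the arcs `(u,v)` of `G` of color
different from `c1` with either `{u,v} ∩ {x,y} = ∅`, or `v = x` (with `x` replaced by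
`e*`), or `u = y` (with `y` replaced by `e*`).  If `D` contains a rainbow directed
Hamilton cycle, then the edge-colored graph on `Fin n` obtained from the underlying
undirected edges of `G` together with the edge `{x,y}` colored `c1` contains a rainbow
Hamilton cycle. -/
theorem statement13 (n : ℕ) (x y : Fin n) (hxy : x ≠ y) (c1 : Fin n)
    (G : Fin n → Fin n → Option (Fin n))
    (D : Option {v : Fin n // v ≠ x ∧ v ≠ y} → Option {v : Fin n // v ≠ x ∧ v ≠ y} →
      Option (Fin n))
    (hD : ∀ a b, D a b =
      match a, b with
      | some u, some v => if G u.1 v.1 = some c1 then none else G u.1 v.1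
      | some u, none => if G u.1 x = some c1 then none else G u.1 x
      | none, some v => if G y v.1 = some c1 then none else G y v.1
      | none, none => none)
    (hHC : ∃ σ : ZMod (Fintype.card (Option {v : Fin n // v ≠ x ∧ v ≠ y})) ≃
        Option {v : Fin n // v ≠ x ∧ v ≠ y},
      (∀ i, (D (σ i) (σ (i + 1))).isSome) ∧
      Function.Injective
        (fun i : ZMod (Fintype.card (Option {v : Fin n // v ≠ x ∧ v ≠ y})) =>
          D (σ i) (σ (i + 1)))) :
    ∃ (τ : ZMod n ≃ Fin n) (χ : ZMod n → Fin n),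
      Function.Injective χ ∧
      ∀ i : ZMod n,
        (Sym2.mk (τ i, τ (i + 1)) = Sym2.mk (x, y) ∧ χ i = c1) ∨
        G (τ i) (τ (i + 1)) = some (χ i) ∨ G (τ (i + 1)) (τ i) = some (χ i) := by
  classical
  set m := Fintype.card (Option {v : Fin n // v ≠ x ∧ v ≠ y}) with hmdef
  obtain ⟨σ0, hArc0, hInj0⟩ := hHC
  -- shift so that σ 0 = none
  set k := σ0.symm none with hk
  set σ : ZMod m ≃ Option {v : Fin n // v ≠ x ∧ v ≠ y} :=
    (Equiv.addRight k).trans σ0 with hσdef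
  have happ : ∀ i : ZMod m, σ i = σ0 (i + k) := fun i => rfl
  have hσ0 : σ 0 = none := by rw [happ, zero_add, hk, Equiv.apply_symm_apply]
  have hArc : ∀ i : ZMod m, (D (σ i) (σ (i + 1))).isSome := by
    intro i
    rw [happ, happ, add_right_comm]
    exact hArc0 (i + k)
  have hInj : Function.Injective fun i : ZMod m => D (σ i) (σ (i + 1)) := by
    intro i j h
    simp only [happ] at h
    rw [add_right_comm i, add_right_comm j] at h
    have h2 : (fun i => D (σ0 i) (σ0 (i + 1))) (i + k) =
        (fun i => D (σ0 i) (σ0 (i + 1))) (j + k) := h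
    exact add_right_cancel (hInj0 h2)
  -- cardinalities
  have hn2 : 2 ≤ n := by
    have : Nontrivial (Fin n) := ⟨⟨x, y, hxy⟩⟩
    have h := Fintype.one_lt_card (α := Fin n)
    rw [Fintype.card_fin] at h
    omega
  have hcS : Fintype.card {v : Fin n // v ≠ x ∧ v ≠ y} = n - 2 := by
    rw [Fintype.card_subtype]
    have h1 : (Finset.univ.filter fun v : Fin n => v ≠ x ∧ v ≠ y) =
        Finset.univ \ {x, y} := by
      ext v; simp [not_or]
    rw [h1, Finset.card_sdiff_of_subset (Finset.subset_univ _), Finset.card_univ, Fintype.card_fin,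
      Finset.card_pair hxy]
  have hm : m = n - 1 := by rw [hmdef, Fintype.card_option, hcS]; omega
  -- degenerate case
  rcases Nat.lt_or_ge n 3 with hn3 | hn3
  · exfalso
    have hempty : IsEmpty {v : Fin n // v ≠ x ∧ v ≠ y} :=
      Fintype.card_eq_zero_iff.mp (by omega)
    have h1 : σ (0 + 1) = none := by
      rcases h : σ (0 + 1) with _ | s
      · rfl
      · exact hempty.elim s
    have h2 := hArc 0
    rw [hσ0, h1, hD] at h2
    simp at h2
  -- main case
  haveI : NeZero n := ⟨by omega⟩
  haveI : NeZero m := ⟨by omega⟩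
  haveI : Fact (1 < n) := ⟨by omega⟩
  have hcast : ∀ a b : ℕ, a < m → b < m → (a : ZMod m) = (b : ZMod m) → a = b := by
    intro a b ha hb h
    have := congrArg ZMod.val h
    rwa [ZMod.val_cast_of_lt ha, ZMod.val_cast_of_lt hb] at this
  have hsome : ∀ j : ℕ, 1 ≤ j → j ≤ n - 2 →
      ∃ u : {v : Fin n // v ≠ x ∧ v ≠ y}, σ (j : ZMod m) = some u := by
    intro j h1 h2
    rcases h : σ (j : ZMod m) with _ | u
    · exfalso
      have hj : σ (j : ZMod m) = σ 0 := by rw [h, hσ0]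
      have hj0 : (j : ZMod m) = ((0 : ℕ) : ZMod m) := by
        have := σ.injective hj
        exact_mod_cast this
      have := hcast j 0 (by omega) (by omega) hj0
      omega
    · exact ⟨u, rfl⟩
  set g : ℕ → Fin n := fun j =>
    if j = n - 1 then x else (σ (j : ZMod m)).elim y Subtype.val with hg
  have hg0 : g 0 = y := by
    simp only [hg]
    rw [if_neg (by omega), Nat.cast_zero, hσ0]
    rfl
  have hgtop : g (n - 1) = x := by simp [hg]
  have hgmid : ∀ j (u : {v : Fin n // v ≠ x ∧ v ≠ y}), 1 ≤ j → j ≤ n - 2 →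
      σ (j : ZMod m) = some u → g j = u.1 := by
    intro j u h1 h2 hu
    simp only [hg]
    rw [if_neg (by omega), hu]
    rfl
  have hgx : ∀ b, b < n - 1 → g b ≠ x := by
    intro b hb
    rcases Nat.eq_zero_or_pos b with rfl | h1
    · rw [hg0]; exact Ne.symm hxy
    · obtain ⟨u, hu⟩ := hsome b h1 (by omega)
      rw [hgmid b u h1 (by omega) hu]; exact u.2.1
  have hgy : ∀ b, 1 ≤ b → b < n - 1 → g b ≠ y := by
    intro b h1 hb
    obtain ⟨u, hu⟩ := hsome b h1 (by omega)
    rw [hgmid b u h1 (by omega) hu]; exact u.2.2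
  have hginj : ∀ a b : ℕ, a < n → b < n → g a = g b → a = b := by
    intro a b ha hb hab
    by_cases hA : a = n - 1 <;> by_cases hB : b = n - 1
    · omega
    · subst hA; rw [hgtop] at hab
      exact absurd hab.symm (hgx b (by omega))
    · subst hB; rw [hgtop] at hab
      exact absurd hab (hgx a (by omega))
    · rcases Nat.eq_zero_or_pos a with rfl | ha1 <;> rcases Nat.eq_zero_or_pos b with rfl | hb1
      · rfl
      · rw [hg0] at hab; exact absurd hab.symm (hgy b hb1 (by omega))
      · rw [hg0] at hab; exact absurd hab (hgy a ha1 (by omega))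
      · obtain ⟨u, hu⟩ := hsome a ha1 (by omega)
        obtain ⟨v, hv⟩ := hsome b hb1 (by omega)
        rw [hgmid a u ha1 (by omega) hu, hgmid b v hb1 (by omega) hv] at hab
        have heq : σ (a : ZMod m) = σ (b : ZMod m) := by
          rw [hu, hv]; exact congrArg some (Subtype.ext hab)
        exact hcast a b (by omega) (by omega) (σ.injective heq)
  have hbij : Function.Bijective (fun i : ZMod n => g i.val) := by
    rw [Fintype.bijective_iff_injective_and_card]
    constructor
    · intro i j h
      exact ZMod.val_injective n (hginj i.val j.val (ZMod.val_lt i) (ZMod.val_lt j) h)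
    · rw [ZMod.card, Fintype.card_fin]
  -- colors
  have hcolex : ∀ j : ZMod m, ∃ c : Fin n, D (σ j) (σ (j + 1)) = some c := fun j =>
    Option.isSome_iff_exists.mp (hArc j)
  choose col hcol using hcolex
  have hDne : ∀ a b (c : Fin n), D a b = some c → c ≠ c1 := by
    have key : ∀ (o : Option (Fin n)) (c : Fin n),
        (if o = some c1 then none else o) = some c → c ≠ c1 := by
      intro o c h hc
      subst hc
      split_ifs at h with hG
      exact hG h
    intro a b c h
    rcases a with _ | u <;> rcases b with _ | v
    · rw [hD] at h; exact absurd h (by simp)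
    · rw [hD] at h; exact key _ _ h
    · rw [hD] at h; exact key _ _ h
    · rw [hD] at h; exact key _ _ h
  have hcolne : ∀ j, col j ≠ c1 := fun j => hDne _ _ _ (hcol j)
  have hcolinj : Function.Injective col := by
    intro i j h
    apply hInj
    simp only []
    rw [hcol i, hcol j, h]
  refine ⟨Equiv.ofBijective _ hbij,
    fun i => if i.val = n - 1 then c1 else col ((i.val : ℕ) : ZMod m), ?_, ?_⟩
  · -- injectivity of χ
    intro i j h
    dsimp only at h
    by_cases h1 : i.val = n - 1 <;> by_cases h2 : j.val = n - 1
    · exact ZMod.val_injective n (by rw [h1, h2])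
    · rw [if_pos h1, if_neg h2] at h
      exact absurd h.symm (hcolne _)
    · rw [if_neg h1, if_pos h2] at h
      exact absurd h (hcolne _)
    · rw [if_neg h1, if_neg h2] at h
      have hv := hcast i.val j.val (by have := ZMod.val_lt i; omega)
        (by have := ZMod.val_lt j; omega) (hcolinj h)
      exact ZMod.val_injective n hv
  · intro i
    have htau : ∀ i : ZMod n, Equiv.ofBijective _ hbij i = g i.val := fun i => rfl
    have hiv : i.val < n := ZMod.val_lt i
    have hadd : (i + 1).val = (i.val + 1) % n := by
      rw [ZMod.val_add, ZMod.val_one]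
    by_cases hA : i.val = n - 1
    · -- the special edge {x, y}
      left
      have h1 : (i + 1).val = 0 := by
        rw [hadd, hA, Nat.sub_add_cancel (by omega), Nat.mod_self]
      constructor
      · rw [htau, htau, hA, h1, hgtop, hg0]
      · dsimp only; rw [if_pos hA]
    · have hc := hcol ((i.val : ℕ) : ZMod m)
      by_cases hB : i.val = n - 2
      · -- edge into x
        have h1 : (i + 1).val = n - 1 := by
          rw [hadd, hB]
          have e : n - 2 + 1 = n - 1 := by omega
          rw [e, Nat.mod_eq_of_lt (by omega)]
        obtain ⟨u, hu⟩ := hsome (n - 2) (by omega) le_rfl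
        have hz : ((i.val : ℕ) : ZMod m) + 1 = 0 := by
          rw [hB]
          have e1 : ((n - 2 : ℕ) : ZMod m) + 1 = ((n - 2 + 1 : ℕ) : ZMod m) := by
            push_cast; ring
          rw [e1]
          have e2 : n - 2 + 1 = m := by omega
          rw [e2, ZMod.natCast_self]
        rw [hz, hσ0, hB, hu, hD] at hc
        dsimp only at hc
        split_ifs at hc with hG
        right; left
        rw [htau, htau, h1, hB, hgtop, hgmid (n - 2) u (by omega) le_rfl hu]
        dsimp only
        rw [if_neg hA, hB, hc]
      · by_cases hA0 : i.val = 0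
        · -- edge out of y
          have h1 : (i + 1).val = 1 := by
            rw [hadd, hA0, Nat.mod_eq_of_lt (by omega)]
          obtain ⟨v, hv⟩ := hsome 1 le_rfl (by omega)
          have hz : ((i.val : ℕ) : ZMod m) = 0 := by rw [hA0, Nat.cast_zero]
          have hz1 : ((i.val : ℕ) : ZMod m) + 1 = ((1 : ℕ) : ZMod m) := by
            rw [hz, zero_add, Nat.cast_one]
          rw [hz1, hz, hσ0, hv, hD] at hc
          dsimp only at hc
          split_ifs at hc with hG
          right; left
          rw [htau, htau, h1, hA0, hg0, hgmid 1 v le_rfl (by omega) hv]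
          dsimp only
          rw [if_neg hA, hA0, hc]
          norm_num
        · -- interior edge
          have h1 : (i + 1).val = i.val + 1 := by
            rw [hadd, Nat.mod_eq_of_lt (by omega)]
          obtain ⟨u, hu⟩ := hsome i.val (by omega) (by omega)
          obtain ⟨v, hv⟩ := hsome (i.val + 1) (by omega) (by omega)
          have e : ((i.val : ℕ) : ZMod m) + 1 = ((i.val + 1 : ℕ) : ZMod m) := by
            push_cast; ring
          rw [e, hu, hv, hD] at hc
          dsimp only at hc
          split_ifs at hc with hG
          right; left
          rw [htau, htau, h1, hgmid i.val u (by omega) (by omega) hu,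
            hgmid (i.val + 1) v (by omega) (by omega) hv]
          dsimp only
          rw [if_neg hA, hc]
end
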